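/- arXiv:1310.5553 — 3 statements merged into one kernel-verified Lean document; each statement's English description precedes it below -/
import Mathlib

section
/- Kostka positivity criterion via doubly stochastic matrices: Let d ≥ 1, n ≥ 1, let λ be a Young diagram with n cells and at most d rows and let f : Fin d → ℕ with Σ_i f i = n. Then there exists a semistandard Young tableau of shape λ with content f if and only if there exists a doubly stochastic matrix D (real d×d, nonnegative entries, all row and column sums equal 1) such that f i = Σ_j D i j · λ.rowLen j for every i. -/
open Matrix Finset
open scoped ComplexOrder

noncomputable section

namespace KostkaAux

/-- prefix-dominance condition for arbitrary content. -/
def SubCond (d : ℕ) (μ : YoungDiagram) (f : Fin d → ℕ) : Prop :=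
  ∀ S : Finset (Fin d), ∑ i ∈ S, f i ≤ ∑ j ∈ Finset.range S.card, μ.rowLen j

lemma card_eq_sum_rowLen (μ : YoungDiagram) (d : ℕ) (h : μ.colLen 0 ≤ d) :
    μ.card = ∑ j ∈ Finset.range d, μ.rowLen j := by
  have : μ.cells = (Finset.range d).biUnion (fun j => μ.row j) := by
    ext c
    simp only [Finset.mem_biUnion, Finset.mem_range, YoungDiagram.mem_row_iff]
    constructor
    · intro hc
      refine ⟨c.1, ?_, hc, rfl⟩
      have h0 : (c.1, 0) ∈ μ := μ.up_left_mem le_rfl (Nat.zero_le _) (by simpa using hc)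
      have := YoungDiagram.mem_iff_lt_colLen.mp h0
      omega
    · rintro ⟨j, _, hc, _⟩; exact hc
  rw [YoungDiagram.card] at *
  rw [this, Finset.card_biUnion]
  · exact Finset.sum_congr rfl fun j _ => (μ.rowLen_eq_card).symm
  · intro x _ y _ hxy
    simp only [Finset.disjoint_left, YoungDiagram.mem_row_iff]
    rintro c ⟨_, rfl⟩ ⟨_, h2⟩; exact hxy h2

lemma prefix_card (μ : YoungDiagram) (k : ℕ) :
    (μ.cells.filter fun c => c.1 < k).card = ∑ j ∈ Finset.range k, μ.rowLen j := by
  have : μ.cells.filter (fun c => c.1 < k) = (Finset.range k).biUnion (fun j => μ.row j) := by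
    ext c
    simp only [Finset.mem_filter, Finset.mem_biUnion, Finset.mem_range, YoungDiagram.mem_row_iff,
      YoungDiagram.mem_cells]
    constructor
    · rintro ⟨hc, hlt⟩; exact ⟨c.1, hlt, hc, rfl⟩
    · rintro ⟨j, hj, hc, rfl⟩; exact ⟨hc, hj⟩
  rw [this, Finset.card_biUnion]
  · exact Finset.sum_congr rfl fun j _ => (μ.rowLen_eq_card).symm
  · intro x _ y _ hxy
    simp only [Finset.disjoint_left, YoungDiagram.mem_row_iff]
    rintro c ⟨_, rfl⟩ ⟨_, h2⟩; exact hxy h2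

lemma subCond_of_tableau {d : ℕ} {μ : YoungDiagram} {f : Fin d → ℕ}
    (T : SemistandardYoungTableau μ)
    (hcount : ∀ i : Fin d, (μ.cells.filter fun c => T c.1 c.2 = (i : ℕ)).card = f i) :
    ∀ S : Finset (Fin d), ∑ i ∈ S, f i ≤ ∑ j ∈ Finset.range S.card, μ.rowLen j := by
  intro S
  set k := S.card with hk
  set Sv : Finset ℕ := S.image Fin.val with hSv
  have hSvcard : Sv.card = k := Finset.card_image_of_injective _ Fin.val_injective
  set A : Finset (ℕ × ℕ) := μ.cells.filter (fun c => T c.1 c.2 ∈ Sv) with hA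
  -- LHS = card A
  have hL : ∑ i ∈ S, f i = A.card := by
    have : A = S.biUnion (fun i => μ.cells.filter fun c => T c.1 c.2 = (i : ℕ)) := by
      ext c
      simp only [hA, Finset.mem_filter, Finset.mem_biUnion, hSv, Finset.mem_image]
      constructor
      · rintro ⟨hc, i, hi, hv⟩; exact ⟨i, hi, hc, hv.symm⟩
      · rintro ⟨i, hi, hc, hv⟩; exact ⟨hc, i, hi, hv.symm⟩
    rw [this, Finset.card_biUnion]
    · exact Finset.sum_congr rfl fun i hi => (hcount i).symm
    · intro x _ y _ hxy
      simp only [Finset.disjoint_left, Finset.mem_filter]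
      rintro c ⟨_, h1⟩ ⟨_, h2⟩
      exact hxy (Fin.val_injective (h1 ▸ h2))
  -- rank within column
  classical
  set rank : ℕ × ℕ → ℕ := fun c =>
    ((Finset.range c.1).filter (fun r => (r, c.2) ∈ μ ∧ T r c.2 ∈ Sv)).card with hrank
  -- rank strictly monotone along a column within A
  have hrankmono : ∀ r1 r2 col, r1 < r2 → (r1, col) ∈ μ → T r1 col ∈ Sv →
      rank (r1, col) < rank (r2, col) := by
    intro r1 r2 col h12 hm1 hv1
    have hsub : insert r1 ((Finset.range r1).filter (fun r => (r, col) ∈ μ ∧ T r col ∈ Sv))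
        ⊆ (Finset.range r2).filter (fun r => (r, col) ∈ μ ∧ T r col ∈ Sv) := by
      intro r hr
      rcases Finset.mem_insert.mp hr with rfl | hr
      · exact Finset.mem_filter.mpr ⟨Finset.mem_range.mpr h12, hm1, hv1⟩
      · rw [Finset.mem_filter, Finset.mem_range] at hr ⊢
        exact ⟨by omega, hr.2⟩
    have hni : r1 ∉ (Finset.range r1).filter (fun r => (r, col) ∈ μ ∧ T r col ∈ Sv) := by
      simp [Finset.mem_filter]
    calc rank (r1, col) < rank (r1, col) + 1 := Nat.lt_succ_self _
      _ = (insert r1 ((Finset.range r1).filter (fun r => (r, col) ∈ μ ∧ T r col ∈ Sv))).card := by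
          rw [Finset.card_insert_of_notMem hni]
      _ ≤ rank (r2, col) := Finset.card_le_card hsub
  -- rank < k on A
  have hranklt : ∀ c ∈ A, rank c < k := by
    rintro ⟨r, col⟩ hc
    rw [hA, Finset.mem_filter] at hc
    obtain ⟨hcm, hcv⟩ := hc
    rw [YoungDiagram.mem_cells] at hcm
    set V := insert r ((Finset.range r).filter (fun r' => (r', col) ∈ μ ∧ T r' col ∈ Sv)) with hV
    have hVcard : V.card = rank (r, col) + 1 := by
      rw [hV, Finset.card_insert_of_notMem (by simp [Finset.mem_filter])]
    have hinj : Set.InjOn (fun r' => T r' col) V := by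
      intro x hx y hy hxy
      have hxm : (x, col) ∈ μ := by
        rcases Finset.mem_insert.mp hx with rfl | hx
        · exact hcm
        · exact (Finset.mem_filter.mp hx).2.1
      have hym : (y, col) ∈ μ := by
        rcases Finset.mem_insert.mp hy with rfl | hy
        · exact hcm
        · exact (Finset.mem_filter.mp hy).2.1
      by_contra hne
      rcases Nat.lt_or_ge x y with h | h
      · exact absurd hxy (Nat.ne_of_lt (T.col_strict h hym))
      · rcases Nat.lt_or_ge y x with h' | h'
        · exact absurd hxy.symm (Nat.ne_of_lt (T.col_strict h' hxm))
        · exact hne (Nat.le_antisymm h' h)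
    have hmaps : ∀ r' ∈ V, T r' col ∈ Sv := by
      intro r' hr'
      rcases Finset.mem_insert.mp hr' with rfl | hr'
      · exact hcv
      · exact (Finset.mem_filter.mp hr').2.2
    have := Finset.card_le_card_of_injOn (fun r' => T r' col) hmaps hinj
    rw [hVcard, hSvcard] at this
    omega
  -- the injection
  have hcardle : A.card ≤ (μ.cells.filter fun c => c.1 < k).card := by
    apply Finset.card_le_card_of_injOn (fun c => (rank c, c.2))
    · rintro ⟨r, col⟩ hc
      have hlt := hranklt _ hc
      rw [hA, Finset.mem_coe, Finset.mem_filter, YoungDiagram.mem_cells] at hc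
      rw [Finset.mem_coe, Finset.mem_filter, YoungDiagram.mem_cells]
      refine ⟨μ.up_left_mem ?_ le_rfl hc.1, hlt⟩
      calc rank (r, col) ≤ (Finset.range r).card := Finset.card_filter_le _ _
        _ = r := Finset.card_range r
    · rintro ⟨r1, col1⟩ h1 ⟨r2, col2⟩ h2 heq
      simp only [Prod.mk.injEq] at heq ⊢
      obtain ⟨hre, hce⟩ := heq
      subst hce
      refine ⟨?_, rfl⟩
      simp only [hA, Finset.mem_coe, Finset.mem_filter, YoungDiagram.mem_cells] at h1 h2
      by_contra hne
      rcases Nat.lt_or_ge r1 r2 with h | h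
      · exact absurd hre (Nat.ne_of_lt (hrankmono r1 r2 col1 h h1.1 h1.2))
      · rcases Nat.lt_or_ge r2 r1 with h' | h'
        · exact absurd hre.symm (Nat.ne_of_lt (hrankmono r2 r1 col1 h' h2.1 h2.2))
        · exact hne (Nat.le_antisymm h' h)
  rw [hL, ← prefix_card μ k]
  exact hcardle

lemma abel_aux (u c : ℕ → ℝ) : ∀ d : ℕ, (∀ k, k + 1 ≤ d → u (k+1) ≤ u k) →
    (∀ m, m ≤ d → ∑ k ∈ Finset.range m, c k ≤ 0) →
    ∑ k ∈ Finset.range (d+1), u k * c k ≤ u d * ∑ k ∈ Finset.range (d+1), c k := by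
  intro d
  induction d with
  | zero => intro _ _; simp
  | succ m ih =>
    intro hu hpre
    have ih' := ih (fun k hk => hu k (by omega)) (fun j hj => hpre j (by omega))
    rw [Finset.sum_range_succ (fun k => u k * c k), Finset.sum_range_succ c]
    have h1 : u (m+1) ≤ u m := hu m le_rfl
    have h2 : ∑ k ∈ Finset.range (m+1), c k ≤ 0 := hpre (m+1) le_rfl
    nlinarith [ih']

lemma abel_bound (d : ℕ) (u c : ℕ → ℝ) (hu : ∀ k, k + 1 < d → u (k+1) ≤ u k)
    (hpre : ∀ m, m ≤ d → ∑ k ∈ Finset.range m, c k ≤ 0)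
    (heq : ∑ k ∈ Finset.range d, c k = 0) :
    ∑ k ∈ Finset.range d, u k * c k ≤ 0 := by
  cases d with
  | zero => simp
  | succ m =>
    have := abel_aux u c m (fun k hk => hu k (by omega)) (fun j hj => hpre j (by omega))
    rw [heq, mul_zero] at this
    exact this

lemma subCond_of_doublyStochastic {d : ℕ} {μ : YoungDiagram} {f : Fin d → ℕ}
    {D : Matrix (Fin d) (Fin d) ℝ} (hD : D ∈ doublyStochastic ℝ (Fin d))
    (hDf : ∀ i : Fin d, (f i : ℝ) = ∑ j : Fin d, D i j * (μ.rowLen j : ℝ)) :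
    ∀ S : Finset (Fin d), ∑ i ∈ S, f i ≤ ∑ j ∈ Finset.range S.card, μ.rowLen j := by
  intro S
  set k := S.card with hk
  have hkd : k ≤ d := by simpa [hk] using Finset.card_le_card (Finset.subset_univ S)
  have key : (∑ i ∈ S, (f i : ℝ)) ≤ ∑ j ∈ Finset.range k, (μ.rowLen j : ℝ) := by
    set c : Fin d → ℝ := fun j => ∑ i ∈ S, D i j with hc
    set e : Fin d → ℝ := fun j => if (j : ℕ) < k then (1:ℝ) else 0 with he
    have hc0 : ∀ j, 0 ≤ c j := fun j =>
      Finset.sum_nonneg fun i _ => nonneg_of_mem_doublyStochastic hD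
    have hc1 : ∀ j, c j ≤ 1 := by
      intro j
      rw [← sum_col_of_mem_doublyStochastic hD j]
      exact Finset.sum_le_sum_of_subset_of_nonneg (Finset.subset_univ S)
        (fun i _ _ => nonneg_of_mem_doublyStochastic hD)
    have hcs : ∑ j, c j = k := by
      rw [hc, Finset.sum_comm,
        Finset.sum_congr rfl (fun i _ => sum_row_of_mem_doublyStochastic hD i)]
      simp [hk]
    have hfk : Finset.filter (fun j => j < k) (Finset.range d) = Finset.range k := by
      ext j; simp only [Finset.mem_filter, Finset.mem_range]; omega
    have hes : ∑ j, e j = k := by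
      rw [he, Fin.sum_univ_eq_sum_range (fun j => if j < k then (1:ℝ) else 0),
        ← Finset.sum_filter, hfk]
      simp
    have hL : (∑ i ∈ S, (f i : ℝ)) = ∑ j : Fin d, c j * (μ.rowLen j : ℝ) := by
      rw [Finset.sum_congr rfl (fun i _ => hDf i), Finset.sum_comm]
      simp [hc, Finset.sum_mul]
    have hR : (∑ j ∈ Finset.range k, (μ.rowLen j : ℝ))
        = ∑ j : Fin d, e j * (μ.rowLen j : ℝ) := by
      rw [he, Fin.sum_univ_eq_sum_range (fun j => (if j < k then (1:ℝ) else 0) * (μ.rowLen j : ℝ))]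
      rw [← hfk, Finset.sum_filter]
      apply Finset.sum_congr rfl
      intro j _
      by_cases hj : j < k <;> simp [hj]
    rw [hL, hR]
    set t : ℝ := if h : k < d then (μ.rowLen k : ℝ) else 0 with ht
    have htle : ∀ j : Fin d, ¬ (j : ℕ) < k → (μ.rowLen j : ℝ) ≤ t := by
      intro j hj
      have hkd' : k < d := lt_of_le_of_lt (not_lt.mp hj) j.2
      rw [ht, dif_pos hkd']
      exact_mod_cast μ.rowLen_anti k j (not_lt.mp hj)
    have htge : ∀ j : Fin d, (j : ℕ) < k → t ≤ (μ.rowLen j : ℝ) := by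
      intro j hj
      rw [ht]
      split
      · exact_mod_cast μ.rowLen_anti j k (le_of_lt hj)
      · positivity
    have hterm : ∀ j : Fin d, (c j - e j) * ((μ.rowLen j : ℝ) - t) ≤ 0 := by
      intro j
      by_cases hjk : (j : ℕ) < k
      · apply mul_nonpos_of_nonpos_of_nonneg
        · have : e j = 1 := by rw [he]; simp [hjk]
          rw [this]; linarith [hc1 j]
        · linarith [htge j hjk]
      · apply mul_nonpos_of_nonneg_of_nonpos
        · have : e j = 0 := by rw [he]; simp [hjk]
          rw [this]; linarith [hc0 j]
        · linarith [htle j hjk]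
    have hsum : ∑ j : Fin d, (c j - e j) * ((μ.rowLen j : ℝ) - t) ≤ 0 := by
      calc ∑ j : Fin d, (c j - e j) * ((μ.rowLen j : ℝ) - t)
          ≤ ∑ _j : Fin d, (0:ℝ) := Finset.sum_le_sum fun j _ => hterm j
        _ = 0 := by simp
    have expand : ∑ j : Fin d, (c j - e j) * ((μ.rowLen j : ℝ) - t)
        = (∑ j : Fin d, c j * (μ.rowLen j : ℝ)) - (∑ j : Fin d, e j * (μ.rowLen j : ℝ))
          - ((∑ j : Fin d, c j) - (∑ j : Fin d, e j)) * t := by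
      calc ∑ j : Fin d, (c j - e j) * ((μ.rowLen j : ℝ) - t)
          = ∑ j : Fin d, (c j * (μ.rowLen j : ℝ) - e j * (μ.rowLen j : ℝ) - (c j - e j) * t) := by
            apply Finset.sum_congr rfl; intro j _; ring
        _ = _ := by
            rw [Finset.sum_sub_distrib, Finset.sum_sub_distrib, ← Finset.sum_mul,
              Finset.sum_sub_distrib]
    rw [expand, hcs, hes, sub_self, zero_mul, sub_zero] at hsum
    linarith
  have : ((∑ i ∈ S, f i : ℕ) : ℝ) ≤ ((∑ j ∈ Finset.range k, μ.rowLen j : ℕ) : ℝ) := by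
    push_cast
    exact key
  exact_mod_cast this

lemma exists_doublyStochastic {d : ℕ} {μ : YoungDiagram} {f : Fin d → ℕ}
    (hrows : μ.colLen 0 ≤ d) (hsum : ∑ i, f i = μ.card) (hsc : SubCond d μ f) :
    ∃ D ∈ doublyStochastic ℝ (Fin d),
      ∀ i : Fin d, (f i : ℝ) = ∑ j : Fin d, D i j * (μ.rowLen j : ℝ) := by
  classical
  rcases Nat.eq_zero_or_pos d with rfl | hd
  · exact ⟨(1 : Equiv.Perm (Fin 0)).permMatrix ℝ, permMatrix_mem_doublyStochastic,
      fun i => i.elim0⟩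
  set lv : ℕ → ℝ := fun j => (μ.rowLen j : ℝ) with hlv
  set fv : Fin d → ℝ := fun i => (f i : ℝ) with hfv
  set v : Equiv.Perm (Fin d) → (Fin d → ℝ) := fun σ => fun i => lv (σ i) with hv
  set idx : ℕ → Fin d := fun k => ⟨min k (d-1), by omega⟩ with hidx
  have hidx_lt : ∀ k, k < d → (idx k : ℕ) = k := by
    intro k hk; simp only [hidx]; omega
  -- total sums
  have hlvsum : ∑ k ∈ Finset.range d, lv k = (μ.card : ℝ) := by
    rw [card_eq_sum_rowLen μ d hrows]
    push_cast
    rfl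
  have hfvsum : ∑ i : Fin d, fv i = (μ.card : ℝ) := by
    rw [← hsum]
    push_cast
    rfl
  -- Step 1: for every functional there is an orbit point on the low side
  have step1 : ∀ φ : (Fin d → ℝ) →L[ℝ] ℝ, ∃ σ : Equiv.Perm (Fin d), φ (v σ) ≤ φ fv := by
    intro φ
    set c : Fin d → ℝ := fun i => φ (fun j => if i = j then 1 else 0) with hc
    have hφ : ∀ y : Fin d → ℝ, φ y = ∑ i, y i * c i := by
      intro y
      conv_lhs => rw [pi_eq_sum_univ y, map_sum]
      exact Finset.sum_congr rfl fun i _ => by rw [φ.map_smul, smul_eq_mul, hc]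
    set τ : Equiv.Perm (Fin d) := Tuple.sort c with hτ
    have hmono : Monotone (c ∘ τ) := Tuple.monotone_sort c
    refine ⟨τ⁻¹, ?_⟩
    rw [hφ, hφ]
    -- reduce to ranged sums
    have key : ∑ k ∈ Finset.range d, (c (τ (idx k))) * lv k
        ≤ ∑ k ∈ Finset.range d, (c (τ (idx k))) * fv (τ (idx k)) := by
      have habel := abel_bound d (fun k => -(c (τ (idx k))))
        (fun k => fv (τ (idx k)) - lv k) ?_ ?_ ?_
      · have h2 : ∑ k ∈ Finset.range d,
            (-(c (τ (idx k)))) * (fv (τ (idx k)) - lv k)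
            = ∑ k ∈ Finset.range d,
              ((c (τ (idx k))) * lv k - (c (τ (idx k))) * fv (τ (idx k))) := by
          exact Finset.sum_congr rfl fun k _ => by ring
        rw [h2, Finset.sum_sub_distrib] at habel
        linarith
      · intro k hk
        simp only [neg_le_neg_iff]
        have h1 : idx k ≤ idx (k+1) := by
          rw [Fin.mk_le_mk]  -- might fail; fallback below
          omega
        exact hmono h1
      · intro m hm
        have hS := hsc ((Finset.univ.filter (fun k : Fin d => (k : ℕ) < m)).image τ)
        have hinj : Set.InjOn τ (Finset.univ.filter (fun k : Fin d => (k : ℕ) < m)) :=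
          fun a _ b _ hab => τ.injective hab
        have hval : Finset.image Fin.val (Finset.univ.filter (fun k : Fin d => (k : ℕ) < m))
            = Finset.range m := by
          ext x
          simp only [Finset.mem_image, Finset.mem_filter, Finset.mem_univ, true_and,
            Finset.mem_range]
          constructor
          · rintro ⟨a, ha, rfl⟩; exact ha
          · intro hx; exact ⟨⟨x, by omega⟩, hx, rfl⟩
        have hfcard : (Finset.univ.filter (fun k : Fin d => (k : ℕ) < m)).card = m := by
          have h := Finset.card_image_of_injective
            (Finset.univ.filter (fun k : Fin d => (k : ℕ) < m)) Fin.val_injective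
          rw [hval, Finset.card_range] at h
          exact h.symm
        have hcardS : ((Finset.univ.filter (fun k : Fin d => (k : ℕ) < m)).image τ).card = m := by
          rw [Finset.card_image_of_injective _ τ.injective, hfcard]
        rw [hcardS] at hS
        have hsumS : ∑ i ∈ (Finset.univ.filter (fun k : Fin d => (k : ℕ) < m)).image τ, f i
            = ∑ k ∈ Finset.range m, f (τ (idx k)) := by
          rw [Finset.sum_image (fun a _ b _ hab => τ.injective hab)]
          refine Finset.sum_nbij' (fun k : Fin d => (k : ℕ)) (fun k => idx k) ?_ ?_ ?_ ?_ ?_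
          · intro a ha; rw [Finset.mem_filter] at ha; exact Finset.mem_range.mpr ha.2
          · intro a ha
            rw [Finset.mem_range] at ha
            rw [Finset.mem_filter]
            exact ⟨Finset.mem_univ _, by rw [hidx_lt a (by omega)]; exact ha⟩
          · intro a ha
            rw [Finset.mem_filter] at ha
            exact Fin.ext (hidx_lt a (by omega))
          · intro a ha
            rw [Finset.mem_range] at ha
            exact hidx_lt a (by omega)
          · intro a ha
            rw [Finset.mem_filter] at ha
            exact congrArg f (congrArg τ (Fin.ext (hidx_lt a (by omega))).symm)
        rw [hsumS] at hS
        have hcast : (∑ k ∈ Finset.range m, f (τ (idx k)) : ℝ)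
            ≤ (∑ j ∈ Finset.range m, μ.rowLen j : ℝ) := by exact_mod_cast hS
        push_cast at hcast
        have : ∑ k ∈ Finset.range m, (fv (τ (idx k)) - lv k)
            = (∑ k ∈ Finset.range m, fv (τ (idx k))) - ∑ k ∈ Finset.range m, lv k :=
          Finset.sum_sub_distrib _ _
        rw [this]
        have e1 : ∑ k ∈ Finset.range m, fv (τ (idx k))
            = ∑ k ∈ Finset.range m, ((f (τ (idx k)) : ℝ)) := rfl
        have e2 : ∑ k ∈ Finset.range m, lv k = ∑ k ∈ Finset.range m, ((μ.rowLen k : ℝ)) := rfl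
        rw [e1, e2]
        linarith
      · -- total equality
        have h1 : ∑ k ∈ Finset.range d, fv (τ (idx k)) = ∑ i : Fin d, fv i := by
          rw [← Fin.sum_univ_eq_sum_range (fun k => fv (τ (idx k))) d]
          rw [show (fun i : Fin d => fv (τ (idx (i : ℕ)))) = fun i : Fin d => fv (τ i) from
            funext fun i => by rw [show idx (i : ℕ) = i from Fin.ext (hidx_lt _ i.2)]]
          exact Equiv.sum_comp τ fv
        rw [Finset.sum_sub_distrib, h1, hfvsum, hlvsum, sub_self]
    -- convert both sides
    have hL : ∑ i : Fin d, (v τ⁻¹) i * c i = ∑ k ∈ Finset.range d, (c (τ (idx k))) * lv k := by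
      rw [← Equiv.sum_comp τ (fun i => (v τ⁻¹) i * c i)]
      rw [← Fin.sum_univ_eq_sum_range (fun k => (c (τ (idx k))) * lv k) d]
      apply Finset.sum_congr rfl
      intro k _
      rw [show idx (k : ℕ) = k from Fin.ext (hidx_lt _ k.2)]
      simp only [hv, Equiv.Perm.inv_def, Equiv.symm_apply_apply]
      ring
    have hR : ∑ i : Fin d, fv i * c i
        = ∑ k ∈ Finset.range d, (c (τ (idx k))) * fv (τ (idx k)) := by
      rw [← Equiv.sum_comp τ (fun i => fv i * c i)]
      rw [← Fin.sum_univ_eq_sum_range (fun k => (c (τ (idx k))) * fv (τ (idx k))) d]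
      apply Finset.sum_congr rfl
      intro k _
      rw [show idx (k : ℕ) = k from Fin.ext (hidx_lt _ k.2)]
      ring
    rw [hL, hR]
    exact key
  -- Step 2: fv lies in the convex hull of the orbit
  have step2 : fv ∈ convexHull ℝ (Set.range v) := by
    by_contra hcon
    obtain ⟨φ, u, hfu, hb⟩ := geometric_hahn_banach_point_closed
      (convex_convexHull ℝ _) (((Set.finite_range v).isClosed_convexHull ℝ)) hcon
    obtain ⟨σ, hσ⟩ := step1 φ
    have := hb _ (subset_convexHull ℝ _ (Set.mem_range_self σ))
    linarith
  -- Step 3: extract a doubly stochastic matrix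
  rw [mem_convexHull_iff_exists_fintype] at step2
  obtain ⟨ι, hι, w, z, hw0, hw1, hz, hxz⟩ := step2
  choose σ hσ using fun i => hz i
  set D : Matrix (Fin d) (Fin d) ℝ :=
    ∑ i : ι, w i • Matrix.of (fun a b => if σ i a = b then (1:ℝ) else 0) with hD
  have hDab : ∀ a b, D a b = ∑ i : ι, w i * (if σ i a = b then (1:ℝ) else 0) := by
    intro a b
    rw [hD]
    simp [Matrix.sum_apply]
  refine ⟨D, ?_, ?_⟩
  · rw [mem_doublyStochastic_iff_sum]
    refine ⟨fun a b => ?_, fun a => ?_, fun b => ?_⟩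
    · rw [hDab]
      apply Finset.sum_nonneg
      intro i _
      have := hw0 i
      positivity
    · calc ∑ b, D a b = ∑ b, ∑ i : ι, w i * (if σ i a = b then (1:ℝ) else 0) :=
            Finset.sum_congr rfl (fun b _ => hDab a b)
        _ = ∑ i : ι, ∑ b, w i * (if σ i a = b then (1:ℝ) else 0) := Finset.sum_comm
        _ = ∑ i : ι, w i := by
            apply Finset.sum_congr rfl; intro i _
            rw [← Finset.mul_sum, Finset.sum_ite_eq Finset.univ (σ i a) (fun _ => (1:ℝ)),
              if_pos (Finset.mem_univ _), mul_one]
        _ = 1 := hw1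
    · calc ∑ a, D a b = ∑ a, ∑ i : ι, w i * (if σ i a = b then (1:ℝ) else 0) :=
            Finset.sum_congr rfl (fun a _ => hDab a b)
        _ = ∑ i : ι, ∑ a, w i * (if σ i a = b then (1:ℝ) else 0) := Finset.sum_comm
        _ = ∑ i : ι, w i := by
            apply Finset.sum_congr rfl; intro i _
            have hiff : ∀ a : Fin d, (σ i a = b) ↔ (a = (σ i)⁻¹ b) := by
              intro a
              constructor
              · intro h; rw [← h, Equiv.Perm.inv_def, Equiv.symm_apply_apply]
              · intro h; rw [h, Equiv.Perm.inv_def, Equiv.apply_symm_apply]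
            rw [Finset.sum_congr rfl (fun a (_ : a ∈ Finset.univ) => by
              rw [if_congr (hiff a) rfl rfl] :
              ∀ a ∈ Finset.univ, w i * (if σ i a = b then (1:ℝ) else 0)
                = w i * (if a = (σ i)⁻¹ b then (1:ℝ) else 0))]
            rw [← Finset.mul_sum, Finset.sum_ite_eq' Finset.univ ((σ i)⁻¹ b) (fun _ => (1:ℝ)),
              if_pos (Finset.mem_univ _), mul_one]
        _ = 1 := hw1
  · intro i0
    have hfv0 : (f i0 : ℝ) = ∑ i : ι, w i * z i i0 := by
      have h := congrFun hxz i0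
      simp only [Finset.sum_apply, Pi.smul_apply, smul_eq_mul] at h
      exact h.symm
    have hRHS : ∑ j : Fin d, D i0 j * (μ.rowLen j : ℝ) = ∑ i : ι, w i * z i i0 := by
      calc ∑ j : Fin d, D i0 j * (μ.rowLen j : ℝ)
          = ∑ j : Fin d, ∑ i : ι, (w i * (if σ i i0 = j then (1:ℝ) else 0)) * (μ.rowLen j : ℝ) := by
            apply Finset.sum_congr rfl
            intro j _
            rw [hDab i0 j, Finset.sum_mul]
        _ = ∑ i : ι, ∑ j : Fin d, (w i * (if σ i i0 = j then (1:ℝ) else 0)) * (μ.rowLen j : ℝ) :=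
            Finset.sum_comm
        _ = ∑ i : ι, w i * z i i0 := by
            apply Finset.sum_congr rfl
            intro i _
            have h1 : ∀ j : Fin d, (w i * (if σ i i0 = j then (1:ℝ) else 0)) * (μ.rowLen j : ℝ)
                = if σ i i0 = j then w i * (μ.rowLen j : ℝ) else 0 := fun j => by
              by_cases h : σ i i0 = j <;> simp [h]
            rw [Finset.sum_congr rfl (fun j _ => h1 j),
              Finset.sum_ite_eq Finset.univ (σ i i0) (fun j => w i * (μ.rowLen j : ℝ)),
              if_pos (Finset.mem_univ _)]
            have h2 : z i i0 = lv ((σ i) i0) := by rw [← hσ i]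
            rw [h2]
        _ = ∑ i : ι, w i * z i i0 := rfl
    rw [hfv0, hRHS]

lemma exists_tableau {d : ℕ} : ∀ (μ : YoungDiagram) (f : Fin d → ℕ),
    μ.colLen 0 ≤ d → (∑ i, f i = μ.card) → SubCond d μ f →
    ∃ T : SemistandardYoungTableau μ,
      (∀ c ∈ μ.cells, T c.1 c.2 < d) ∧
      ∀ i : Fin d, (μ.cells.filter fun c => T c.1 c.2 = (i : ℕ)).card = f i := by
  induction d with
  | zero =>
    intro μ f hrows _ _
    have hempty : ∀ p : ℕ × ℕ, p ∉ μ := by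
      rintro ⟨i, j⟩ hij
      have h0 : (i, 0) ∈ μ := μ.up_left_mem le_rfl (Nat.zero_le _) hij
      have := YoungDiagram.mem_iff_lt_colLen.mp h0
      omega
    refine ⟨⟨fun _ _ => 0, ?_, ?_, fun _ => rfl⟩, ?_, ?_⟩
    · intro i j1 j2 _ hm; exact absurd hm (hempty _)
    · intro i1 i2 j _ hm; exact absurd hm (hempty _)
    · intro c hc; exact absurd ((YoungDiagram.mem_cells _).mp hc) (hempty _)
    · exact fun i => i.elim0
  | succ d ih =>
    intro μ f hrows hsum hsc
    classical
    have hLanti : ∀ j1 j2, j1 ≤ j2 → μ.rowLen j2 ≤ μ.rowLen j1 :=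
      fun j1 j2 h => μ.rowLen_anti j1 j2 h
    set F : ℕ := f (Fin.last d) with hF
    set g : ℕ → ℕ :=
      fun j => μ.rowLen j - min F (μ.rowLen j) + min F (μ.rowLen (j+1)) with hg
    have fact1 : ∀ j, g j ≤ μ.rowLen j := by
      intro j
      have h1 := hLanti j (j+1) (by omega)
      simp only [hg]
      omega
    have fact2 : ∀ j, μ.rowLen (j+1) ≤ g j := by
      intro j
      have h1 := hLanti j (j+1) (by omega)
      simp only [hg]
      omega
    have hganti : Antitone g := by
      apply antitone_nat_of_succ_le
      exact fun j => le_trans (fact1 (j+1)) (fact2 j)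
    -- the inner diagram ν
    set ν : YoungDiagram :=
      ⟨μ.cells.filter (fun c => c.2 < g c.1), by
        rintro ⟨a1, a2⟩ ⟨b1, b2⟩ hba ha
        simp only [Finset.coe_filter, Set.mem_setOf_eq, YoungDiagram.mem_cells] at ha ⊢
        obtain ⟨h1, h2⟩ := Prod.le_def.mp hba
        simp only at h1 h2
        exact ⟨μ.up_left_mem h1 h2 ha.1,
          lt_of_le_of_lt h2 (lt_of_lt_of_le ha.2 (hganti h1))⟩⟩ with hν
    have νcells_eq : ν.cells = μ.cells.filter (fun c => c.2 < g c.1) := by rw [hν]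
    have νmemcells : ∀ p : ℕ × ℕ, p ∈ ν.cells ↔ (p ∈ μ ∧ p.2 < g p.1) := by
      intro p
      rw [νcells_eq, Finset.mem_filter, YoungDiagram.mem_cells]
    have νmem : ∀ r c : ℕ, ((r, c) ∈ ν) ↔ c < g r := by
      intro r c
      rw [← YoungDiagram.mem_cells, νmemcells]
      constructor
      · exact fun h => h.2
      · intro h
        exact ⟨YoungDiagram.mem_iff_lt_rowLen.mpr (lt_of_lt_of_le h (fact1 r)), h⟩
    have νsub : ∀ p : ℕ × ℕ, p ∈ ν → p ∈ μ := by
      rintro ⟨r, c⟩ h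
      exact YoungDiagram.mem_iff_lt_rowLen.mpr (lt_of_lt_of_le ((νmem r c).mp h) (fact1 r))
    have νrowLen : ∀ r, ν.rowLen r = g r := by
      intro r
      apply Nat.le_antisymm
      · by_contra h
        have h' : (r, g r) ∈ ν := YoungDiagram.mem_iff_lt_rowLen.mpr (by omega)
        exact absurd ((νmem _ _).mp h') (by omega)
      · by_contra h
        have h' : (r, ν.rowLen r) ∈ ν := (νmem _ _).mpr (by omega)
        exact absurd (YoungDiagram.mem_iff_lt_rowLen.mp h') (by omega)
    have hLd1 : μ.rowLen (d+1) = 0 := by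
      by_contra h
      have h' : (d+1, 0) ∈ μ := YoungDiagram.mem_iff_lt_rowLen.mpr (by omega)
      have := YoungDiagram.mem_iff_lt_colLen.mp h'
      omega
    have hcard : μ.card = ∑ j ∈ Finset.range (d+1), μ.rowLen j :=
      card_eq_sum_rowLen μ (d+1) hrows
    have hFL0 : F ≤ μ.rowLen 0 := by
      have h := hsc {Fin.last d}
      simpa [hF] using h
    have hLdF : μ.rowLen d ≤ F := by
      have h1 := hsc (Finset.univ.erase (Fin.last d))
      rw [Finset.card_erase_of_mem (Finset.mem_univ _), Finset.card_univ, Fintype.card_fin] at h1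
      have h2 : ∑ i ∈ Finset.univ.erase (Fin.last d), f i + F = μ.card := by
        rw [hF, Finset.sum_erase_add _ _ (Finset.mem_univ _)]
        exact hsum
      have h3 : ∑ j ∈ Finset.range (d+1), μ.rowLen j
          = ∑ j ∈ Finset.range d, μ.rowLen j + μ.rowLen d := Finset.sum_range_succ _ d
      simp only [Nat.add_sub_cancel] at h1
      omega
    have hpresum : ∀ m, ∑ j ∈ Finset.range m, g j + F
        = ∑ j ∈ Finset.range m, μ.rowLen j + min F (μ.rowLen m) := by
      intro m
      induction m with
      | zero => simp [min_eq_left hFL0]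
      | succ m ihm =>
        rw [Finset.sum_range_succ g, Finset.sum_range_succ (fun j => μ.rowLen j)]
        have h1 : min F (μ.rowLen m) ≤ μ.rowLen m := min_le_right _ _
        simp only [hg] at *
        omega
    have hνrows : ν.colLen 0 ≤ d := by
      by_contra h
      have h' : (d, 0) ∈ ν := YoungDiagram.mem_iff_lt_colLen.mpr (by omega)
      have h'' := (νmem _ _).mp h'
      have hgd : g d = 0 := by simp only [hg]; omega
      omega
    have hνcard : ν.card + F = μ.card := by
      have h1 : ν.card = ∑ j ∈ Finset.range (d+1), g j := by
        rw [card_eq_sum_rowLen ν (d+1) (by omega)]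
        exact Finset.sum_congr rfl (fun j _ => νrowLen j)
      have h2 := hpresum (d+1)
      rw [hLd1] at h2
      simp only [Nat.min_zero, Nat.add_zero] at h2
      omega
    set f' : Fin d → ℕ := fun i => f i.castSucc with hf'
    have hsum' : ∑ i, f' i = ν.card := by
      have h1 : ∑ i, f i = ∑ i : Fin d, f' i + F := by
        rw [hF, hf', Fin.sum_univ_castSucc]
      omega
    have hsc' : SubCond d ν f' := by
      intro S
      set k := S.card with hk
      have hkd : k ≤ d := by simpa [hk] using Finset.card_le_card (Finset.subset_univ S)
      have hgpre : ∑ j ∈ Finset.range k, ν.rowLen j = ∑ j ∈ Finset.range k, g j :=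
        Finset.sum_congr rfl (fun j _ => νrowLen j)
      have hgpre2 := hpresum k
      set Sm : Finset (Fin (d+1)) := S.map Fin.castSuccEmb with hSm
      have hSmcard : Sm.card = k := Finset.card_map _
      have hSmsum : ∑ i ∈ Sm, f i = ∑ i ∈ S, f' i := by
        rw [hSm, Finset.sum_map]; rfl
      rcases le_or_gt F (μ.rowLen k) with hcase | hcase
      · have h := hsc Sm
        rw [hSmcard, hSmsum] at h
        omega
      · have hlast : Fin.last d ∉ Sm := by
          intro hmem
          obtain ⟨i, _, hi⟩ := Finset.mem_map.mp hmem
          exact absurd hi (Fin.castSucc_lt_last i).ne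
        have h := hsc (insert (Fin.last d) Sm)
        rw [Finset.card_insert_of_notMem hlast, Finset.sum_insert hlast, hSmcard, hSmsum,
          ← hF] at h
        have h3 : ∑ j ∈ Finset.range (k+1), μ.rowLen j
            = ∑ j ∈ Finset.range k, μ.rowLen j + μ.rowLen k := Finset.sum_range_succ _ k
        omega
    obtain ⟨T', hT'lt, hT'count⟩ := ih ν f' hνrows hsum' hsc'
    set E : ℕ → ℕ → ℕ := fun r c =>
      if c < g r then T' r c else if (r, c) ∈ μ then d else 0 with hE
    have hEν : ∀ r c, c < g r → E r c = T' r c := by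
      intro r c h; simp only [hE, if_pos h]
    have hEstrip : ∀ r c, (r, c) ∈ μ → ¬ c < g r → E r c = d := by
      intro r c hm h; simp only [hE, if_neg h, if_pos hm]
    have hT'lt' : ∀ r c, c < g r → T' r c < d := by
      intro r c h
      exact hT'lt (r, c) ((YoungDiagram.mem_cells _).mpr ((νmem r c).mpr h))
    refine ⟨⟨E, ?_, ?_, ?_⟩, ?_, ?_⟩
    · intro r j1 j2 hj hm
      by_cases h2 : j2 < g r
      · have h1 : j1 < g r := by omega
        rw [hEν r j1 h1, hEν r j2 h2]
        exact T'.row_weak hj ((νmem r j2).mpr h2)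
      · rw [hEstrip r j2 hm h2]
        by_cases h1 : j1 < g r
        · rw [hEν r j1 h1]
          exact le_of_lt (hT'lt' r j1 h1)
        · rw [hEstrip r j1 (μ.up_left_mem le_rfl (le_of_lt hj) hm) h1]
    · intro r1 r2 j hr hm
      by_cases h2 : j < g r2
      · rw [hEν r2 j h2, hEν r1 j (by
          have := hganti (le_of_lt hr); omega)]
        exact T'.col_strict hr ((νmem r2 j).mpr h2)
      · rw [hEstrip r2 j hm h2]
        have hj1 : j < g r1 := by
          have hjL : j < μ.rowLen r2 := YoungDiagram.mem_iff_lt_rowLen.mp hm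
          have h3 := fact2 (r2 - 1)
          rw [show r2 - 1 + 1 = r2 by omega] at h3
          have h4 : g (r2 - 1) ≤ g r1 := hganti (by omega : r1 ≤ r2 - 1)
          omega
        rw [hEν r1 j hj1]
        exact hT'lt' r1 j hj1
    · intro r c hm
      have h1 : ¬ c < g r := by
        intro h
        exact hm (νsub (r,c) ((νmem r c).mpr h))
      simp only [hE, if_neg h1, if_neg hm]
    · rintro ⟨r, c⟩ hc
      show E r c < d + 1
      by_cases h : c < g r
      · rw [hEν r c h]; exact Nat.lt_succ_of_lt (hT'lt' r c h)
      · rw [hEstrip r c ((YoungDiagram.mem_cells _).mp hc) h]; omega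
    · intro i
      show (μ.cells.filter fun c => E c.1 c.2 = (i : ℕ)).card = f i
      by_cases hi : (i : ℕ) < d
      · have hset : μ.cells.filter (fun c => E c.1 c.2 = (i:ℕ))
            = ν.cells.filter (fun c => T' c.1 c.2 = (i:ℕ)) := by
          rw [νcells_eq, Finset.filter_filter]
          apply Finset.filter_congr
          rintro ⟨r, c⟩ hm
          rw [YoungDiagram.mem_cells] at hm
          simp only
          constructor
          · intro he
            by_cases h : c < g r
            · exact ⟨h, by rwa [hEν r c h] at he⟩
            · rw [hEstrip r c hm h] at he; omega
          · rintro ⟨h, he⟩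
            rwa [hEν r c h]
        rw [hset]
        exact (hT'count ⟨(i:ℕ), hi⟩).trans (congrArg f (Fin.ext rfl))
      · have hid : (i : ℕ) = d := by omega
        have hset : μ.cells.filter (fun c => E c.1 c.2 = (i:ℕ))
            = μ.cells \ ν.cells := by
          rw [νcells_eq, ← Finset.filter_not]
          apply Finset.filter_congr
          rintro ⟨r, c⟩ hm
          rw [YoungDiagram.mem_cells] at hm
          simp only [not_lt]
          constructor
          · intro he
            by_contra hcon
            push_neg at hcon
            rw [hEν r c hcon] at he
            have := hT'lt' r c hcon
            omega
          · intro h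
            rw [hEstrip r c hm (by omega), hid]
        rw [hset, Finset.card_sdiff_of_subset (by rw [νcells_eq]; exact Finset.filter_subset _ _)]
        have hFi : f i = F := by rw [hF]; congr 1; exact Fin.ext hid
        have e1 : μ.cells.card = μ.card := rfl
        have e2 : ν.cells.card = ν.card := rfl
        omega

end KostkaAux

/-- A density matrix on `ℂ^d`: positive semidefinite with trace one. -/
def IsDensityMatrix {d : ℕ} (ρ : Matrix (Fin d) (Fin d) ℂ) : Prop :=
  ρ.PosSemidef ∧ ρ.trace = 1

/-- A semistandard Young tableau of shape `μ` has content `f : Fin d → ℕ` if all its entries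
on the cells of `μ` are `< d` and the entry `i` occurs exactly `f i` times.  The Kostka number
`K_{f,μ}` is positive iff such a tableau exists. -/
def HasContent {d : ℕ} (μ : YoungDiagram) (f : Fin d → ℕ) : Prop :=
  ∃ T : SemistandardYoungTableau μ,
    (∀ c ∈ μ.cells, T c.1 c.2 < d) ∧
    ∀ i : Fin d, (μ.cells.filter fun c => T c.1 c.2 = (i : ℕ)).card = f i

/-- **Kostka positivity criterion via doubly stochastic matrices:** `K_{f,λ} > 0` iff
`f = D λ` for some doubly stochastic matrix `D`. -/
theorem kostka_pos_iff_doublyStochastic (d n : ℕ) (hd : 1 ≤ d) (hn : 1 ≤ n)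
    (lam : YoungDiagram) (hcard : lam.card = n) (hrows : lam.colLen 0 ≤ d)
    (f : Fin d → ℕ) (hf : ∑ i, f i = n) :
    HasContent lam f ↔
      ∃ D ∈ doublyStochastic ℝ (Fin d),
        ∀ i : Fin d, (f i : ℝ) = ∑ j : Fin d, D i j * (lam.rowLen j : ℝ) := by
  constructor
  · rintro ⟨T, hT, hcount⟩
    exact KostkaAux.exists_doublyStochastic hrows (hf.trans hcard.symm)
      (KostkaAux.subCond_of_tableau T hcount)
  · rintro ⟨D, hD, hDf⟩
    exact KostkaAux.exists_tableau lam f hrows (hf.trans hcard.symm)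
      (KostkaAux.subCond_of_doublyStochastic hD hDf)
end
end

section
/- No-go theorem for permutation-invariant universal detectors, first part (Theorem 6): Let d ≥ 1, n ≥ 1, ε ≥ 0, and let A be a permutation-invariant matrix indexed by (Fin n → Fin d) such that A and 1 − A are both positive semidefinite. If Re(trace(A · ρ^{⊗n})) ≥ 1 − ε for every density matrix ρ on ℂ^d, then A − (1 − ε·(2dn)^{4d²})·1 is positive semidefinite. -/
open Matrix Filter
open scoped ComplexOrder

noncomputable section

/-- A test: both `P` and `1 - P` are positive semidefinite. -/
def IsTest {ι : Type} [Fintype ι] [DecidableEq ι] (P : Matrix ι ι ℂ) : Prop :=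
  P.PosSemidef ∧ ((1 : Matrix ι ι ℂ) - P).PosSemidef

/-- Tensor product of `n` matrices on `ℂ^d`, as a matrix indexed by `Fin n → Fin d`. -/
def tensorProd {d n : ℕ} (ρs : Fin n → Matrix (Fin d) (Fin d) ℂ) :
    Matrix (Fin n → Fin d) (Fin n → Fin d) ℂ :=
  fun i j => ∏ k, ρs k (i k) (j k)

/-- `n`-fold tensor power of a matrix on `ℂ^d`. -/
def tensorPow {d : ℕ} (ρ : Matrix (Fin d) (Fin d) ℂ) (n : ℕ) :
    Matrix (Fin n → Fin d) (Fin n → Fin d) ℂ :=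
  tensorProd fun _ => ρ

/-- Quantum relative entropy `D(ρ‖σ)` (base-2 logarithm) of `ρ` w.r.t. the diagonal density
matrix with diagonal `t`, written using the eigenvalues of `ρ` and its diagonal entries. -/
def qRelEnt {d : ℕ} (ρ : Matrix (Fin d) (Fin d) ℂ) (t : Fin d → ℝ) : ℝ :=
  if h : ρ.IsHermitian then
    (∑ i, h.eigenvalues i * Real.logb 2 (h.eigenvalues i))
      - ∑ i, (ρ i i).re * Real.logb 2 (t i)
  else 0

/-- Permutation invariance of an operator on `(ℂ^d)^{⊗ n}`. -/
def PermInvariant {d n : ℕ} (A : Matrix (Fin n → Fin d) (Fin n → Fin d) ℂ) : Prop :=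
  ∀ π : Equiv.Perm (Fin n), ∀ i j, A (i ∘ π) (j ∘ π) = A i j

/-- The constant `α = 1/(2 ln 2)` from Pinsker's inequality. -/
def alphaC : ℝ := 1 / (2 * Real.log 2)

/-- The error term `Θ(n, ε, d, σ)`, where `t` is the diagonal of `σ`. -/
def Theta {d : ℕ} (n : ℕ) (ε : ℝ) (t : Fin d → ℝ) : ℝ :=
  ((d : ℝ) ^ 2 / (n : ℝ)) * Real.logb 2 (2 * (n : ℝ))
    + ε * Real.logb 2 ((d : ℝ) / ε)
    + (d : ℝ) * ε * ⨆ i, |Real.logb 2 (t i)|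

open Finset Complex

namespace NogoPf
noncomputable section

variable {d n : ℕ}

abbrev Ix (d n : ℕ) := Fin n → Fin d
abbrev Dd (d : ℕ) := Fin d × Fin d
abbrev Px (d n : ℕ) := Fin n → Dd d

def fstI (p : Px d n) : Ix d n := fun k => (p k).1
def sndI (p : Px d n) : Ix d n := fun k => (p k).2
def pairI (i j : Ix d n) : Px d n := fun k => (i k, j k)

def typeOf (p : Px d n) : Dd d → ℕ := fun c => (Finset.univ.filter fun k => p k = c).card

lemma typeOf_sum (p : Px d n) : ∑ c, typeOf p c = n := by
  classical
  have := Finset.card_eq_sum_card_fiberwise (f := p) (s := Finset.univ) (t := Finset.univ)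
    (fun k _ => Finset.mem_univ (p k))
  simpa [typeOf] using this.symm

lemma typeOf_le (p : Px d n) (c : Dd d) : typeOf p c ≤ n := by
  classical
  calc typeOf p c ≤ (Finset.univ : Finset (Fin n)).card := Finset.card_le_card (Finset.filter_subset _ _)
  _ = n := by simp

lemma prod_comp_typeOf {M : Type*} [CommMonoid M] (g : Dd d → M) (p : Px d n) :
    ∏ k, g (p k) = ∏ c, g c ^ typeOf p c := by
  classical
  rw [← Finset.prod_fiberwise_of_maps_to (g := p) (t := Finset.univ) (fun k _ => Finset.mem_univ (p k))]
  refine Finset.prod_congr rfl fun c _ => ?_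
  rw [Finset.prod_congr rfl (fun k hk => ?_), Finset.prod_const, typeOf]
  · exact congrArg g (Finset.mem_filter.mp hk).2

lemma sum_comp_typeOf {M : Type*} [AddCommMonoid M] (g : Dd d → M) (p : Px d n) :
    ∑ k, g (p k) = ∑ c, typeOf p c • g c := by
  classical
  rw [← Finset.sum_fiberwise_of_maps_to (g := p) (t := Finset.univ) (fun k _ => Finset.mem_univ (p k))]
  refine Finset.sum_congr rfl fun c _ => ?_
  rw [Finset.sum_congr rfl (fun k hk => ?_), Finset.sum_const, typeOf]
  · exact congrArg g (Finset.mem_filter.mp hk).2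

lemma typeOf_comp_perm (p : Px d n) (π : Equiv.Perm (Fin n)) :
    typeOf (p ∘ π) = typeOf p := by
  classical
  funext c
  simp only [typeOf]
  apply Finset.card_bij (fun k _ => π k)
  · intro k hk; simp only [Finset.mem_filter, Finset.mem_univ, true_and] at hk ⊢; exact hk
  · intro a _ b _ h; exact π.injective h
  · intro b hb
    refine ⟨π.symm b, ?_, by simp⟩
    simp only [Finset.mem_filter, Finset.mem_univ, true_and, Function.comp_apply] at hb ⊢
    simpa using hb

lemma exists_perm_of_typeOf_eq {p p' : Px d n} (h : typeOf p = typeOf p') :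
    ∃ π : Equiv.Perm (Fin n), p' = p ∘ π := by
  classical
  have hc : ∀ c : Dd d, Fintype.card {k // p' k = c} = Fintype.card {k // p k = c} := by
    intro c
    have h1 : Fintype.card {k // p k = c} = typeOf p c := Fintype.card_subtype _
    have h2 : Fintype.card {k // p' k = c} = typeOf p' c := Fintype.card_subtype _
    rw [h1, h2, h]
  let e : ∀ c : Dd d, {k // p' k = c} ≃ {k // p k = c} := fun c => Fintype.equivOfCardEq (hc c)
  refine ⟨Equiv.ofFiberEquiv e, ?_⟩
  funext k
  exact (Equiv.ofFiberEquiv_map e k).symm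

def clsCard (d n : ℕ) (T : Dd d → ℕ) : ℕ :=
  ((Finset.univ : Finset (Px d n)).filter fun p => typeOf p = T).card

lemma clsCard_mul_factorial (p : Px d n) :
    clsCard d n (typeOf p) * ∏ c, (typeOf p c).factorial = n.factorial := by
  classical
  set F : Equiv.Perm (Fin n) → Px d n := fun π => p ∘ π with hF
  have hkey : (Finset.univ : Finset (Equiv.Perm (Fin n))).card
      = ∑ p' ∈ (Finset.univ : Finset (Px d n)).filter (fun q => typeOf q = typeOf p),
          ((Finset.univ : Finset (Equiv.Perm (Fin n))).filter (fun π => F π = p')).card := by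
    apply Finset.card_eq_sum_card_fiberwise
    intro π _
    simp only [Finset.mem_filter, Finset.mem_univ, true_and, hF]
    exact Finset.mem_coe.mpr (Finset.mem_filter.mpr ⟨Finset.mem_univ _, typeOf_comp_perm p π⟩)
  have hfiber : ∀ p' ∈ (Finset.univ : Finset (Px d n)).filter (fun q => typeOf q = typeOf p),
      ((Finset.univ : Finset (Equiv.Perm (Fin n))).filter (fun π => F π = p')).card
        = ∏ c, (typeOf p c).factorial := by
    intro p' hp'
    simp only [Finset.mem_filter, Finset.mem_univ, true_and] at hp'
    obtain ⟨τ, rfl⟩ := exists_perm_of_typeOf_eq hp'.symm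
    have : ((Finset.univ : Finset (Equiv.Perm (Fin n))).filter (fun π => F π = p ∘ τ)).card
        = Fintype.card {g : Equiv.Perm (Fin n) // p ∘ g = p} := by
      rw [Fintype.card_subtype]
      apply Finset.card_bij (fun π _ => π * τ⁻¹)
      · intro π hπ
        simp only [Finset.mem_filter, Finset.mem_univ, true_and, hF] at hπ ⊢
        funext k
        have := congrFun hπ (τ⁻¹ k)
        simpa using this
      · intro a _ b _ h
        exact mul_right_cancel h
      · intro g hg
        simp only [Finset.mem_filter, Finset.mem_univ, true_and] at hg
        refine ⟨g * τ, ?_, by group⟩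
        simp only [Finset.mem_filter, Finset.mem_univ, true_and, hF]
        funext k
        have := congrFun hg (τ k)
        simpa using this
    rw [this, DomMulAct.stabilizer_card]
    refine Finset.prod_congr rfl fun c _ => ?_
    rw [Fintype.card_subtype]
    rfl
  rw [Finset.sum_congr rfl hfiber, Finset.sum_const, smul_eq_mul] at hkey
  have huniv : (Finset.univ : Finset (Equiv.Perm (Fin n))).card = n.factorial := by
    rw [← Fintype.card, Fintype.card_perm, Fintype.card_fin]
  rw [← huniv, hkey]
  rfl

/-- `m^k * m! ≤ m^m * k!`. -/
lemma nat_mode (m : ℕ) : ∀ k : ℕ, m ^ k * m.factorial ≤ m ^ m * k.factorial := by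
  have up : ∀ j : ℕ, m ^ (m + j) * m.factorial ≤ m ^ m * (m + j).factorial := by
    intro j
    induction j with
    | zero => simp [mul_comm]
    | succ j ih =>
      have h1 : m ^ (m + (j+1)) * m.factorial = m * (m ^ (m + j) * m.factorial) := by ring
      have h2 : m ^ m * (m + (j+1)).factorial = (m + j + 1) * (m ^ m * (m + j).factorial) := by
        show m ^ m * (m + j + 1).factorial = _
        rw [Nat.factorial_succ]; ring
      rw [h1, h2]
      calc m * (m ^ (m + j) * m.factorial) ≤ m * (m ^ m * (m + j).factorial) :=
            Nat.mul_le_mul_left _ ih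
        _ ≤ (m + j + 1) * (m ^ m * (m + j).factorial) :=
            Nat.mul_le_mul_right _ (by omega)
  have down : ∀ j : ℕ, j ≤ m → m ^ (m - j) * m.factorial ≤ m ^ m * (m - j).factorial := by
    intro j
    induction j with
    | zero => intro _; simp [mul_comm]
    | succ j ih =>
      intro hj
      have hj' : j ≤ m := by omega
      have hm : 0 < m := by omega
      have ihj := ih hj'
      have hsub : m - j = (m - (j+1)) + 1 := by omega
      -- from m^(m-j) * m! ≤ m^m * (m-j)!
      have h1 : m * (m ^ (m - (j+1)) * m.factorial) = m ^ (m - j) * m.factorial := by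
        rw [hsub]; ring
      have h2 : m ^ m * (m - j).factorial = (m - j) * (m ^ m * (m - (j+1)).factorial) := by
        rw [hsub, Nat.factorial_succ]; ring
      have : m * (m ^ (m - (j+1)) * m.factorial) ≤ m * (m ^ m * (m - (j+1)).factorial) := by
        rw [h1]
        calc m ^ (m - j) * m.factorial ≤ m ^ m * (m - j).factorial := ihj
          _ = (m - j) * (m ^ m * (m - (j+1)).factorial) := h2
          _ ≤ m * (m ^ m * (m - (j+1)).factorial) := Nat.mul_le_mul_right _ (by omega)
      exact Nat.le_of_mul_le_mul_left this hm
  intro k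
  rcases le_or_gt m k with h | h
  · obtain ⟨j, rfl⟩ := Nat.exists_eq_add_of_le h
    exact up j
  · have : k = m - (m - k) := by omega
    rw [this]
    exact down (m - k) (by omega)


def typesF (d n : ℕ) : Finset (Dd d → ℕ) := Finset.image typeOf (Finset.univ : Finset (Px d n))

lemma typeOf_mem_typesF (p : Px d n) : typeOf p ∈ typesF d n :=
  Finset.mem_image_of_mem _ (Finset.mem_univ p)

lemma card_typesF : (typesF d n).card ≤ (n + 1) ^ (d * d) := by
  classical
  have hinj : ∀ T ∈ typesF d n, ∀ T' ∈ typesF d n,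
      (fun (T : Dd d → ℕ) => (fun c => (⟨min (T c) n, by omega⟩ : Fin (n+1)))) T
        = (fun (T : Dd d → ℕ) => (fun c => (⟨min (T c) n, by omega⟩ : Fin (n+1)))) T' → T = T' := by
    intro T hT T' hT' h
    obtain ⟨p, _, rfl⟩ := Finset.mem_image.mp hT
    obtain ⟨p', _, rfl⟩ := Finset.mem_image.mp hT'
    funext c
    have := congrFun h c
    have h1 : min (typeOf p c) n = typeOf p c := min_eq_left (typeOf_le p c)
    have h2 : min (typeOf p' c) n = typeOf p' c := min_eq_left (typeOf_le p' c)
    have := congrArg Fin.val this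
    simpa [h1, h2] using this
  calc (typesF d n).card ≤ (Finset.univ : Finset (Dd d → Fin (n+1))).card :=
        Finset.card_le_card_of_injOn _ (fun _ _ => Finset.mem_univ _) hinj
    _ = (n + 1) ^ (d * d) := by
        rw [Finset.card_univ, Fintype.card_pi, Finset.prod_const, Finset.card_univ,
          Fintype.card_fin, Fintype.card_prod, Fintype.card_fin]

/-- real weight of a type under distribution `t`. -/
def tw (t : Dd d → ℝ) (T : Dd d → ℕ) : ℝ := ∏ c, t c ^ T c

lemma mode_nat (p₀ p₁ : Px d n) :
    clsCard d n (typeOf p₁) * ∏ c, (typeOf p₀ c) ^ (typeOf p₁ c)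
      ≤ clsCard d n (typeOf p₀) * ∏ c, (typeOf p₀ c) ^ (typeOf p₀ c) := by
  classical
  set T := typeOf p₀
  set T' := typeOf p₁
  have key : ∀ c : Dd d, (T c) ^ (T' c) * (T c).factorial ≤ (T c) ^ (T c) * (T' c).factorial :=
    fun c => nat_mode (T c) (T' c)
  have hprod : (∏ c, (T c) ^ (T' c)) * (∏ c, (T c).factorial)
      ≤ (∏ c, (T c) ^ (T c)) * (∏ c, (T' c).factorial) := by
    rw [← Finset.prod_mul_distrib, ← Finset.prod_mul_distrib]
    exact Finset.prod_le_prod' fun c _ => key c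
  have h0 : clsCard d n T * ∏ c, (T c).factorial = n.factorial := clsCard_mul_factorial p₀
  have h1 : clsCard d n T' * ∏ c, (T' c).factorial = n.factorial := clsCard_mul_factorial p₁
  have hposT' : 0 < ∏ c, (T' c).factorial := Finset.prod_pos fun c _ => Nat.factorial_pos _
  have hposT : 0 < ∏ c, (T c).factorial := Finset.prod_pos fun c _ => Nat.factorial_pos _
  -- multiply goal by (∏ T'!)*(∏ T!)
  have : (clsCard d n T' * ∏ c, (T c) ^ (T' c)) * ((∏ c, (T' c).factorial) * (∏ c, (T c).factorial))
      ≤ (clsCard d n T * ∏ c, (T c) ^ (T c)) * ((∏ c, (T' c).factorial) * (∏ c, (T c).factorial)) := by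
    calc (clsCard d n T' * ∏ c, (T c) ^ (T' c)) * ((∏ c, (T' c).factorial) * (∏ c, (T c).factorial))
        = n.factorial * ((∏ c, (T c) ^ (T' c)) * (∏ c, (T c).factorial)) := by rw [← h1]; ring
      _ ≤ n.factorial * ((∏ c, (T c) ^ (T c)) * (∏ c, (T' c).factorial)) :=
          Nat.mul_le_mul_left _ hprod
      _ = (clsCard d n T * ∏ c, (T c) ^ (T c)) * ((∏ c, (T' c).factorial) * (∏ c, (T c).factorial)) := by
          rw [← h0]; ring
  exact Nat.le_of_mul_le_mul_right this (Nat.mul_pos hposT' hposT)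

lemma sum_tw_clsCard (t : Dd d → ℝ) (hsum : ∑ c, t c = 1) :
    ∑ T' ∈ typesF d n, (clsCard d n T' : ℝ) * tw t T' = 1 := by
  classical
  have h1 : ∑ p : Px d n, ∏ k, t (p k) = 1 := by
    rw [show (1:ℝ) = ∏ _k : Fin n, ∑ c, t c by rw [Finset.prod_congr rfl fun k _ => hsum, Finset.prod_const, one_pow]]
    rw [Finset.prod_univ_sum (fun _ : Fin n => (Finset.univ : Finset (Dd d))) (fun _ c => t c)]
    rw [Fintype.piFinset_univ]
  have h2 : ∀ p : Px d n, ∏ k, t (p k) = tw t (typeOf p) := fun p => prod_comp_typeOf t p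
  rw [← h1, Finset.sum_congr rfl fun p _ => h2 p]
  rw [← Finset.sum_fiberwise_of_maps_to (g := typeOf) (t := typesF d n)
    (fun p (_ : p ∈ Finset.univ) => typeOf_mem_typesF p) (fun p => tw t (typeOf p))]
  refine Finset.sum_congr rfl fun T' hT' => ?_
  rw [Finset.sum_congr rfl (fun p hp => by rw [(Finset.mem_filter.mp hp).2]),
    Finset.sum_const, nsmul_eq_mul]
  rfl

lemma key_count (p₀ : Px d n) (hn : 0 < n) :
    1 ≤ ((typesF d n).card : ℝ) *
      ((clsCard d n (typeOf p₀) : ℝ) * tw (fun c => (typeOf p₀ c : ℝ) / n) (typeOf p₀)) := by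
  classical
  set t : Dd d → ℝ := fun c => (typeOf p₀ c : ℝ) / n with ht
  have htn : ∀ c, 0 ≤ t c := fun c => div_nonneg (Nat.cast_nonneg _) (Nat.cast_nonneg _)
  have hsum : ∑ c, t c = 1 := by
    rw [ht]
    rw [← Finset.sum_div]
    rw [show ∑ c, (typeOf p₀ c : ℝ) = ((∑ c, typeOf p₀ c : ℕ) : ℝ) by push_cast; ring]
    rw [typeOf_sum p₀]
    field_simp
  have hdiv : ∀ p : Px d n, tw t (typeOf p)
      = (∏ c, (typeOf p₀ c : ℝ) ^ (typeOf p c)) / (n : ℝ) ^ n := by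
    intro p
    rw [ht, tw]
    rw [Finset.prod_congr rfl fun c _ => div_pow _ _ _]
    rw [Finset.prod_div_distrib]
    congr 1
    rw [Finset.prod_pow_eq_pow_sum]
    rw [typeOf_sum p]
  have hmode : ∀ T' ∈ typesF d n, (clsCard d n T' : ℝ) * tw t T'
      ≤ (clsCard d n (typeOf p₀) : ℝ) * tw t (typeOf p₀) := by
    intro T' hT'
    obtain ⟨p₁, _, rfl⟩ := Finset.mem_image.mp hT'
    rw [hdiv p₁, hdiv p₀]
    rw [mul_div_assoc', mul_div_assoc']
    have hmr : (clsCard d n (typeOf p₁) : ℝ) * ∏ c, (typeOf p₀ c : ℝ) ^ typeOf p₁ c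
        ≤ (clsCard d n (typeOf p₀) : ℝ) * ∏ c, (typeOf p₀ c : ℝ) ^ typeOf p₀ c := by
      exact_mod_cast mode_nat p₀ p₁
    gcongr
  have h1 : (1 : ℝ) = ∑ T' ∈ typesF d n, (clsCard d n T' : ℝ) * tw t T' :=
    (sum_tw_clsCard t hsum).symm
  calc (1:ℝ) = ∑ T' ∈ typesF d n, (clsCard d n T' : ℝ) * tw t T' := h1
    _ ≤ ∑ _T' ∈ typesF d n, (clsCard d n (typeOf p₀) : ℝ) * tw t (typeOf p₀) :=
        Finset.sum_le_sum hmode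
    _ = ((typesF d n).card : ℝ) * ((clsCard d n (typeOf p₀) : ℝ) * tw t (typeOf p₀)) := by
        rw [Finset.sum_const, nsmul_eq_mul]

lemma tw_pos (p₀ : Px d n) (hn : 0 < n) :
    0 < tw (fun c => (typeOf p₀ c : ℝ) / n) (typeOf p₀) := by
  apply Finset.prod_pos
  intro c _
  rcases Nat.eq_zero_or_pos (typeOf p₀ c) with h | h
  · rw [h]; norm_num
  · apply pow_pos
    apply div_pos (by exact_mod_cast h) (by exact_mod_cast hn)




def pairE : (Ix d n × Ix d n) ≃ Px d n where
  toFun x := pairI x.1 x.2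
  invFun p := (fstI p, sndI p)
  left_inv := fun x => rfl
  right_inv := fun p => rfl

def core (B : Matrix (Ix d n) (Ix d n) ℂ) (p q : Px d n) : ℂ :=
  B (fstI p) (fstI q) * (if sndI p = sndI q then 1 else 0)

def qf (B : Matrix (Ix d n) (Ix d n) ℂ) (u v : Px d n → ℂ) : ℂ :=
  ∑ p, ∑ q, (starRingEnd ℂ) (u p) * core B p q * v q

lemma qf_eq_sum (B : Matrix (Ix d n) (Ix d n) ℂ) (u v : Px d n → ℂ) :
    qf B u v = ∑ j : Ix d n, ∑ i : Ix d n, ∑ i' : Ix d n,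
      (starRingEnd ℂ) (u (pairI i j)) * B i i' * v (pairI i' j) := by
  classical
  rw [qf, ← Equiv.sum_comp (pairE (d := d) (n := n))
    (fun p => ∑ q, (starRingEnd ℂ) (u p) * core B p q * v q)]
  rw [Fintype.sum_prod_type]
  have hinner : ∀ i j : Ix d n, ∑ q, (starRingEnd ℂ) (u (pairE (i, j))) * core B (pairE (i, j)) q * v q
      = ∑ i' : Ix d n, (starRingEnd ℂ) (u (pairI i j)) * B i i' * v (pairI i' j) := by
    intro i j
    rw [← Equiv.sum_comp (pairE (d := d) (n := n))
      (fun q => (starRingEnd ℂ) (u (pairE (i, j))) * core B (pairE (i, j)) q * v q)]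
    rw [Fintype.sum_prod_type]
    refine Finset.sum_congr rfl fun i' _ => ?_
    have : ∀ j' : Ix d n, (starRingEnd ℂ) (u (pairE (i, j))) * core B (pairE (i, j)) (pairE (i', j')) * v (pairE (i', j'))
        = (if j = j' then 1 else 0) * ((starRingEnd ℂ) (u (pairI i j)) * B i i' * v (pairI i' j')) := by
      intro j'
      show (starRingEnd ℂ) (u (pairI i j)) * (B i i' * (if j = j' then (1:ℂ) else 0)) * v (pairI i' j') = _
      by_cases h : j = j' <;> simp [h] <;> ring
    rw [Finset.sum_congr rfl fun j' _ => this j']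
    simp only [ite_mul, one_mul, zero_mul]
    rw [Finset.sum_ite_eq (Finset.univ : Finset (Ix d n)) j, if_pos (Finset.mem_univ j)]
  rw [Finset.sum_congr rfl fun i _ => Finset.sum_congr rfl fun j _ => hinner i j]
  exact Finset.sum_comm

lemma qf_trace (B S : Matrix (Ix d n) (Ix d n) ℂ) :
    qf B (fun p => S (fstI p) (sndI p)) (fun p => S (fstI p) (sndI p))
      = Matrix.trace (B * (S * Sᴴ)) := by
  classical
  have hR : Matrix.trace (B * (S * Sᴴ))
      = ∑ i : Ix d n, ∑ i' : Ix d n, ∑ j : Ix d n, B i i' * (S i' j * (starRingEnd ℂ) (S i j)) := by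
    simp only [Matrix.trace, Matrix.diag, Matrix.mul_apply, Matrix.conjTranspose_apply,
      Finset.mul_sum, RCLike.star_def]
  rw [qf_eq_sum, hR]
  have hfst : ∀ (i j : Ix d n), fstI (pairI i j) = i := fun _ _ => rfl
  have hsnd : ∀ (i j : Ix d n), sndI (pairI i j) = j := fun _ _ => rfl
  calc (∑ j : Ix d n, ∑ i : Ix d n, ∑ i' : Ix d n,
        (starRingEnd ℂ) (S (fstI (pairI i j)) (sndI (pairI i j))) * B i i'
          * S (fstI (pairI i' j)) (sndI (pairI i' j)))
      = ∑ i : Ix d n, ∑ j : Ix d n, ∑ i' : Ix d n,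
        (starRingEnd ℂ) (S i j) * B i i' * S i' j := Finset.sum_comm
    _ = ∑ i : Ix d n, ∑ i' : Ix d n, ∑ j : Ix d n, B i i' * (S i' j * (starRingEnd ℂ) (S i j)) := by
        refine Finset.sum_congr rfl fun i _ => ?_
        rw [Finset.sum_comm]
        exact Finset.sum_congr rfl fun i' _ => Finset.sum_congr rfl fun j _ => by ring

lemma qf_nonneg {B : Matrix (Ix d n) (Ix d n) ℂ} (hB : B.PosSemidef) (u : Px d n → ℂ) :
    0 ≤ (qf B u u).re := by
  classical
  rw [qf_eq_sum, Complex.re_sum]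
  apply Finset.sum_nonneg
  intro j _
  have h : ∑ i : Ix d n, ∑ i' : Ix d n,
      (starRingEnd ℂ) (u (pairI i j)) * B i i' * u (pairI i' j)
      = dotProduct (star fun i => u (pairI i j)) (B.mulVec fun i => u (pairI i j)) := by
    rw [dotProduct]
    refine Finset.sum_congr rfl fun i _ => ?_
    rw [Matrix.mulVec, dotProduct, Finset.mul_sum]
    refine Finset.sum_congr rfl fun i' _ => ?_
    simp [mul_assoc]
  rw [h]
  exact hB.re_dotProduct_nonneg _

lemma qf_sub_sub (B : Matrix (Ix d n) (Ix d n) ℂ) (u v : Px d n → ℂ) :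
    qf B (u - v) (u - v) = qf B u u - qf B u v - qf B v u + qf B v v := by
  simp only [qf, Pi.sub_apply, map_sub, sub_mul, mul_sub, Finset.sum_sub_distrib]
  ring

lemma qf_cs {B : Matrix (Ix d n) (Ix d n) ℂ} (hB : B.PosSemidef) (u v : Px d n → ℂ) :
    (qf B u v).re + (qf B v u).re ≤ (qf B u u).re + (qf B v v).re := by
  have h := qf_nonneg hB (u - v)
  rw [qf_sub_sub] at h
  simp only [Complex.add_re, Complex.sub_re] at h
  linarith

lemma qf_sum_left {τ : Type*} (B : Matrix (Ix d n) (Ix d n) ℂ)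
    (s : Finset τ) (u : τ → Px d n → ℂ) (v : Px d n → ℂ) :
    qf B (fun p => ∑ T ∈ s, u T p) v = ∑ T ∈ s, qf B (u T) v := by
  classical
  simp only [qf, map_sum, Finset.sum_mul]
  rw [Finset.sum_congr rfl fun p (_ : p ∈ Finset.univ) => Finset.sum_comm (s := Finset.univ) (t := s)]
  exact Finset.sum_comm

lemma qf_sum_right {τ : Type*} (B : Matrix (Ix d n) (Ix d n) ℂ)
    (s : Finset τ) (u : Px d n → ℂ) (v : τ → Px d n → ℂ) :
    qf B u (fun p => ∑ T ∈ s, v T p) = ∑ T ∈ s, qf B u (v T) := by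
  classical
  simp only [qf, Finset.mul_sum]
  rw [Finset.sum_congr rfl fun p (_ : p ∈ Finset.univ) => Finset.sum_comm (s := Finset.univ) (t := s)]
  exact Finset.sum_comm

lemma qf_sum_sum {τ : Type*} [DecidableEq τ] (B : Matrix (Ix d n) (Ix d n) ℂ)
    (s : Finset τ) (u : τ → Px d n → ℂ) :
    qf B (fun p => ∑ T ∈ s, u T p) (fun p => ∑ T ∈ s, u T p)
      = ∑ T ∈ s, ∑ T' ∈ s, qf B (u T) (u T') := by
  rw [qf_sum_left]
  exact Finset.sum_congr rfl fun T _ => qf_sum_right B s (u T) u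

lemma qf_avg {τ : Type*} [DecidableEq τ] {B : Matrix (Ix d n) (Ix d n) ℂ} (hB : B.PosSemidef)
    (s : Finset τ) (u : τ → Px d n → ℂ) :
    (qf B (fun p => ∑ T ∈ s, u T p) (fun p => ∑ T ∈ s, u T p)).re
      ≤ (s.card : ℝ) * ∑ T ∈ s, (qf B (u T) (u T)).re := by
  classical
  rw [qf_sum_sum, Complex.re_sum]
  have step : ∀ T ∈ s, (∑ T' ∈ s, qf B (u T) (u T')).re
      = ∑ T' ∈ s, (qf B (u T) (u T')).re := fun T _ => Complex.re_sum _ _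
  rw [Finset.sum_congr rfl step]
  have h2 : (2:ℝ) * ∑ T ∈ s, ∑ T' ∈ s, (qf B (u T) (u T')).re
      ≤ 2 * ((s.card : ℝ) * ∑ T ∈ s, (qf B (u T) (u T)).re) := by
    have hswap : ∑ T ∈ s, ∑ T' ∈ s, (qf B (u T) (u T')).re
        = ∑ T ∈ s, ∑ T' ∈ s, (qf B (u T') (u T)).re := Finset.sum_comm
    have : (2:ℝ) * ∑ T ∈ s, ∑ T' ∈ s, (qf B (u T) (u T')).re
        = ∑ T ∈ s, ∑ T' ∈ s, ((qf B (u T) (u T')).re + (qf B (u T') (u T)).re) := by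
      rw [two_mul]
      nth_rewrite 2 [hswap]
      rw [← Finset.sum_add_distrib]
      refine Finset.sum_congr rfl fun T _ => ?_
      rw [← Finset.sum_add_distrib]
    rw [this]
    have hb : ∀ T ∈ s, ∀ T' ∈ s, (qf B (u T) (u T')).re + (qf B (u T') (u T)).re
        ≤ (qf B (u T) (u T)).re + (qf B (u T') (u T')).re := fun T _ T' _ => qf_cs hB _ _
    calc ∑ T ∈ s, ∑ T' ∈ s, ((qf B (u T) (u T')).re + (qf B (u T') (u T)).re)
        ≤ ∑ T ∈ s, ∑ T' ∈ s, ((qf B (u T) (u T)).re + (qf B (u T') (u T')).re) :=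
          Finset.sum_le_sum fun T hT => Finset.sum_le_sum fun T' hT' => hb T hT T' hT'
      _ = 2 * ((s.card : ℝ) * ∑ T ∈ s, (qf B (u T) (u T)).re) := by
          rw [Finset.sum_congr rfl fun T (_ : T ∈ s) => Finset.sum_add_distrib]
          rw [Finset.sum_add_distrib]
          rw [Finset.sum_congr rfl fun T (_ : T ∈ s) => Finset.sum_const ((qf B (u T) (u T)).re)]
          rw [Finset.sum_const]
          simp only [nsmul_eq_mul]
          rw [← Finset.mul_sum]
          ring
  linarith




def xi (n : ℕ) : ℂ := Complex.exp (2 * Real.pi * Complex.I / (n + 1 : ℕ))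

lemma xi_prim (n : ℕ) : IsPrimitiveRoot (xi n) (n + 1) :=
  Complex.isPrimitiveRoot_exp (n + 1) (by omega)

lemma xi_ne_zero (n : ℕ) : xi n ≠ 0 := Complex.exp_ne_zero _

lemma xi_pow (n : ℕ) : (xi n) ^ (n + 1) = 1 := (xi_prim n).pow_eq_one

lemma conj_xi (n : ℕ) : (starRingEnd ℂ) (xi n) = (xi n)⁻¹ := by
  rw [xi, ← Complex.exp_conj, ← Complex.exp_neg]
  congr 1
  rw [show ((2:ℂ) * Real.pi * Complex.I / (n + 1 : ℕ)) = ((2 * Real.pi : ℝ) : ℂ) * Complex.I / ((n+1 : ℕ) : ℝ) by push_cast; ring]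
  rw [map_div₀, _root_.map_mul, Complex.conj_ofReal, Complex.conj_I, Complex.conj_ofReal]
  ring

lemma abs_xi (n : ℕ) : ‖xi n‖ = 1 := by
  rw [xi, Complex.norm_exp]
  have : (2 * Real.pi * Complex.I / (n + 1 : ℕ)).re = 0 := by
    have : (2 * Real.pi * Complex.I / (n + 1 : ℕ)) = (2 * Real.pi / (n+1 : ℕ) : ℝ) * Complex.I := by
      push_cast; ring
    rw [this, Complex.re_ofReal_mul, Complex.I_re, mul_zero]
  rw [this, Real.exp_zero]

lemma geom (n : ℕ) (x : ℂ) (hx : x ^ (n+1) = 1) :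
    ∑ k : Fin (n+1), x ^ (k : ℕ) = if x = 1 then ((n:ℂ) + 1) else 0 := by
  rw [Fin.sum_univ_eq_sum_range]
  by_cases h : x = 1
  · simp [h]
  · rw [if_neg h, geom_sum_eq h, hx]
    simp


variable {d n : ℕ}

def phiv (t : Dd d → ℝ) (z : Dd d → Fin (n+1)) (c : Dd d) : ℂ :=
  ((Real.sqrt (t c) : ℝ) : ℂ) * (xi n) ^ ((z c : ℕ))

def wv (t : Dd d → ℝ) (z : Dd d → Fin (n+1)) : Px d n → ℂ := fun p => ∏ k, phiv t z (p k)

def ind (T : Dd d → ℕ) : Px d n → ℂ := fun p => if typeOf p = T then 1 else 0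

def gram (d : ℕ) (φ : Dd d → ℂ) : Matrix (Fin d) (Fin d) ℂ :=
  Matrix.of fun a a' => ∑ b, φ (a, b) * (starRingEnd ℂ) (φ (a', b))

lemma zphase (p q : Px d n) :
    ∑ z : Dd d → Fin (n+1),
      ((starRingEnd ℂ) (∏ k, (xi n) ^ ((z (p k) : ℕ)))) * (∏ k, (xi n) ^ ((z (q k) : ℕ)))
      = if typeOf p = typeOf q then (((n+1 : ℕ)) : ℂ) ^ (d * d) else 0 := by
  classical
  set ξ := xi n with hξ
  have hterm : ∀ z : Dd d → Fin (n+1),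
      ((starRingEnd ℂ) (∏ k, ξ ^ ((z (p k) : ℕ)))) * (∏ k, ξ ^ ((z (q k) : ℕ)))
      = ∏ c : Dd d, ((ξ⁻¹ ^ (typeOf p c) * ξ ^ (typeOf q c)) ^ ((z c : ℕ))) := by
    intro z
    have h1 : (∏ k, ξ ^ ((z (p k) : ℕ))) = ∏ c : Dd d, (ξ ^ ((z c : ℕ))) ^ (typeOf p c) :=
      prod_comp_typeOf (fun c => ξ ^ ((z c : ℕ))) p
    have h2 : (∏ k, ξ ^ ((z (q k) : ℕ))) = ∏ c : Dd d, (ξ ^ ((z c : ℕ))) ^ (typeOf q c) :=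
      prod_comp_typeOf (fun c => ξ ^ ((z c : ℕ))) q
    rw [h1, h2, map_prod]
    rw [← Finset.prod_mul_distrib]
    refine Finset.prod_congr rfl fun c _ => ?_
    rw [map_pow, map_pow, conj_xi]
    rw [← hξ]
    rw [show ((ξ⁻¹ ^ ((z c : ℕ))) ^ typeOf p c) = ((ξ⁻¹ ^ typeOf p c) ^ ((z c : ℕ))) from pow_right_comm _ _ _]
    rw [show ((ξ ^ ((z c : ℕ))) ^ typeOf q c) = ((ξ ^ typeOf q c) ^ ((z c : ℕ))) from pow_right_comm _ _ _]
    rw [mul_pow]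
  rw [Finset.sum_congr rfl fun z _ => hterm z]
  have hswap : ∑ z : Dd d → Fin (n+1), ∏ c : Dd d, ((ξ⁻¹ ^ (typeOf p c) * ξ ^ (typeOf q c)) ^ ((z c : ℕ)))
      = ∏ c : Dd d, ∑ k : Fin (n+1), ((ξ⁻¹ ^ (typeOf p c) * ξ ^ (typeOf q c)) ^ ((k : ℕ))) := by
    rw [Finset.prod_univ_sum]
    rw [Fintype.piFinset_univ]
  rw [hswap]
  have hgeom : ∀ c : Dd d, (∑ k : Fin (n+1), ((ξ⁻¹ ^ (typeOf p c) * ξ ^ (typeOf q c)) ^ ((k : ℕ))))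
      = if typeOf p c = typeOf q c then ((n : ℂ) + 1) else 0 := by
    intro c
    set x := ξ⁻¹ ^ (typeOf p c) * ξ ^ (typeOf q c) with hx
    have hxpow : x ^ (n+1) = 1 := by
      have h1 : (ξ⁻¹) ^ (n+1) = 1 := by rw [inv_pow, hξ, xi_pow n, inv_one]
      rw [hx, mul_pow, pow_right_comm (ξ⁻¹) (typeOf p c) (n+1), h1, one_pow, one_mul,
        pow_right_comm ξ (typeOf q c) (n+1), hξ, xi_pow n, one_pow]
    have hx1 : x = 1 ↔ typeOf p c = typeOf q c := by
      have hzp : x = ξ ^ ((typeOf q c : ℤ) - (typeOf p c : ℤ)) := by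
        rw [hx, sub_eq_add_neg, zpow_add₀ (xi_ne_zero n), _root_.zpow_neg, zpow_natCast,
          zpow_natCast, ← hξ, inv_pow]
        ring
      rw [hzp]
      rw [(xi_prim n).zpow_eq_one_iff_dvd]
      constructor
      · intro hdvd
        have habs : |(typeOf q c : ℤ) - (typeOf p c : ℤ)| < ((n+1 : ℕ) : ℤ) := by
          have h1 := typeOf_le p c
          have h2 := typeOf_le q c
          rw [abs_lt]
          omega
        have := Int.eq_zero_of_abs_lt_dvd hdvd habs
        omega
      · intro h
        rw [h]
        simp
    rw [geom n x hxpow, if_congr hx1 rfl rfl]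
  rw [Finset.prod_congr rfl fun c _ => hgeom c]
  by_cases h : typeOf p = typeOf q
  · rw [if_pos h]
    rw [Finset.prod_congr rfl fun c _ => if_pos (congrFun h c)]
    rw [Finset.prod_const]
    congr 1
    · push_cast; ring
    · rw [Finset.card_univ, Fintype.card_prod, Fintype.card_fin]
  · rw [if_neg h]
    have : ∃ c : Dd d, typeOf p c ≠ typeOf q c := by
      by_contra hc
      push_neg at hc
      exact h (funext hc)
    obtain ⟨c, hc⟩ := this
    exact Finset.prod_eq_zero (Finset.mem_univ c) (if_neg hc)

lemma ind_conj (T : Dd d → ℕ) (p : Px d n) : (starRingEnd ℂ) (ind T p) = ind T p := by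
  unfold ind
  split_ifs <;> simp

lemma zsum (t : Dd d → ℝ) (ht : ∀ c, 0 ≤ t c) (p q : Px d n) :
    ∑ z : Dd d → Fin (n+1), (starRingEnd ℂ) (wv t z p) * wv t z q
      = (((n+1 : ℕ)) : ℂ) ^ (d * d) * (if typeOf p = typeOf q then ((tw t (typeOf q) : ℝ) : ℂ) else 0) := by
  classical
  have hsplit : ∀ (z : Dd d → Fin (n+1)) (r : Px d n), wv t z r
      = (∏ k, ((Real.sqrt (t (r k)) : ℝ) : ℂ)) * ∏ k, (xi n) ^ ((z (r k) : ℕ)) := by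
    intro z r
    simp only [wv, phiv]
    rw [← Finset.prod_mul_distrib]
  have hconjsq : ∀ r : Px d n, (starRingEnd ℂ) (∏ k, ((Real.sqrt (t (r k)) : ℝ) : ℂ))
      = ∏ k, ((Real.sqrt (t (r k)) : ℝ) : ℂ) := by
    intro r
    rw [map_prod]
    exact Finset.prod_congr rfl fun k _ => Complex.conj_ofReal _
  have hterm : ∀ z : Dd d → Fin (n+1), (starRingEnd ℂ) (wv t z p) * wv t z q
      = ((∏ k, ((Real.sqrt (t (p k)) : ℝ) : ℂ)) * (∏ k, ((Real.sqrt (t (q k)) : ℝ) : ℂ)))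
        * (((starRingEnd ℂ) (∏ k, (xi n) ^ ((z (p k) : ℕ)))) * (∏ k, (xi n) ^ ((z (q k) : ℕ)))) := by
    intro z
    rw [hsplit z p, hsplit z q, _root_.map_mul, hconjsq]
    ring
  rw [Finset.sum_congr rfl fun z _ => hterm z]
  rw [← Finset.mul_sum Finset.univ
    (fun z : Dd d → Fin (n+1) => ((starRingEnd ℂ) (∏ k, (xi n) ^ ((z (p k) : ℕ))))
      * (∏ k, (xi n) ^ ((z (q k) : ℕ))))
    ((∏ k, ((Real.sqrt (t (p k)) : ℝ) : ℂ)) * (∏ k, ((Real.sqrt (t (q k)) : ℝ) : ℂ)))]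
  rw [zphase p q]
  by_cases h : typeOf p = typeOf q
  · rw [if_pos h, if_pos h]
    have hsq : ∀ r : Px d n, (∏ k, ((Real.sqrt (t (r k)) : ℝ) : ℂ))
        = ∏ c, ((Real.sqrt (t c) : ℝ) : ℂ) ^ (typeOf r c) := fun r =>
      prod_comp_typeOf (fun c => ((Real.sqrt (t c) : ℝ) : ℂ)) r
    have : (∏ k, ((Real.sqrt (t (p k)) : ℝ) : ℂ)) * (∏ k, ((Real.sqrt (t (q k)) : ℝ) : ℂ))
        = ((tw t (typeOf q) : ℝ) : ℂ) := by
      rw [hsq p, hsq q, h, ← Finset.prod_mul_distrib]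
      rw [tw, Complex.ofReal_prod]
      refine Finset.prod_congr rfl fun c _ => ?_
      rw [← mul_pow, ← Complex.ofReal_mul, Real.mul_self_sqrt (ht c), Complex.ofReal_pow]
    rw [this]
    ring
  · rw [if_neg h, if_neg h]
    ring

lemma gram_posSemidef (φ : Dd d → ℂ) : (gram d φ).PosSemidef := by
  have : gram d φ = (Matrix.of fun a b => φ (a, b)) * (Matrix.of fun a b => φ (a, b))ᴴ := by
    ext a a'
    simp only [gram, Matrix.of_apply, Matrix.mul_apply, Matrix.conjTranspose_apply,
      RCLike.star_def]
  rw [this]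
  exact Matrix.posSemidef_self_mul_conjTranspose _

lemma gram_trace (t : Dd d → ℝ) (ht : ∀ c, 0 ≤ t c) (hsum : ∑ c, t c = 1)
    (z : Dd d → Fin (n+1)) : (gram d (phiv t z)).trace = 1 := by
  classical
  have hentry : ∀ c : Dd d, phiv t z c * (starRingEnd ℂ) (phiv t z c) = ((t c : ℝ) : ℂ) := by
    intro c
    rw [Complex.mul_conj]
    simp only [phiv]
    rw [Complex.normSq_mul, Complex.normSq_ofReal]
    have h1 : Complex.normSq ((xi n) ^ ((z c : ℕ))) = 1 := by
      rw [Complex.normSq_eq_norm_sq, norm_pow, abs_xi]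
      simp
    rw [h1, Real.mul_self_sqrt (ht c), mul_one]
  rw [Matrix.trace]
  have : ∀ a, (gram d (phiv t z)).diag a = ∑ b, ((t (a, b) : ℝ) : ℂ) := by
    intro a
    show (∑ b, phiv t z (a, b) * (starRingEnd ℂ) (phiv t z (a, b))) = _
    exact Finset.sum_congr rfl fun b _ => hentry (a, b)
  rw [Finset.sum_congr rfl fun a _ => this a]
  rw [← Fintype.sum_prod_type (f := fun c : Dd d => ((t c : ℝ) : ℂ))]
  rw [← Complex.ofReal_sum]
  rw [hsum]
  simp

lemma trace_tensorPow (ρ : Matrix (Fin d) (Fin d) ℂ) :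
    (tensorPow ρ n).trace = ρ.trace ^ n := by
  classical
  rw [Matrix.trace, Matrix.trace]
  have : ∀ i : Ix d n, (tensorPow ρ n).diag i = ∏ k, ρ (i k) (i k) := fun i => rfl
  rw [Finset.sum_congr rfl fun i _ => this i]
  rw [show ((∑ a, ρ.diag a) ^ n) = ∏ _k : Fin n, (∑ a, ρ.diag a) by rw [Finset.prod_const]; simp]
  rw [Finset.prod_univ_sum (fun _ : Fin n => (Finset.univ : Finset (Fin d))) (fun _ a => ρ.diag a)]
  rw [Fintype.piFinset_univ]
  rfl

lemma trace_gram_qf (B : Matrix (Ix d n) (Ix d n) ℂ) (φ : Dd d → ℂ) :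
    (B * tensorPow (gram d φ) n).trace
      = qf B (fun p => ∏ k, φ (p k)) (fun p => ∏ k, φ (p k)) := by
  classical
  rw [qf_eq_sum]
  have hL : (B * tensorPow (gram d φ) n).trace
      = ∑ i : Ix d n, ∑ i' : Ix d n, B i i' * ∑ j : Ix d n,
          (∏ k, φ (i' k, j k)) * ((starRingEnd ℂ) (∏ k, φ (i k, j k))) := by
    rw [Matrix.trace]
    refine Finset.sum_congr rfl fun i _ => ?_
    rw [Matrix.diag, Matrix.mul_apply]
    refine Finset.sum_congr rfl fun i' _ => ?_
    congr 1
    show (∏ k, gram d φ (i' k) (i k)) = _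
    have hg : ∀ k : Fin n, gram d φ (i' k) (i k)
        = ∑ b, φ (i' k, b) * (starRingEnd ℂ) (φ (i k, b)) := fun k => rfl
    rw [Finset.prod_congr rfl fun k _ => hg k]
    rw [Finset.prod_univ_sum (fun _ : Fin n => (Finset.univ : Finset (Fin d)))
      (fun k b => φ (i' k, b) * (starRingEnd ℂ) (φ (i k, b)))]
    rw [Fintype.piFinset_univ]
    refine Finset.sum_congr rfl fun j _ => ?_
    rw [Finset.prod_mul_distrib, map_prod]
  rw [hL]
  rw [Finset.sum_comm]
  rw [Finset.sum_congr rfl fun i' _ => Finset.sum_congr rfl fun i _ => Finset.mul_sum _ _ _]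
  rw [Finset.sum_congr rfl fun i' _ => Finset.sum_comm]
  rw [Finset.sum_comm]
  refine Finset.sum_congr rfl fun j _ => ?_
  rw [Finset.sum_comm]
  refine Finset.sum_congr rfl fun i _ => Finset.sum_congr rfl fun i' _ => ?_
  have h1 : ∀ k, φ (pairI i j k) = φ (i k, j k) := fun k => rfl
  have h2 : ∀ k, φ (pairI i' j k) = φ (i' k, j k) := fun k => rfl
  rw [Finset.prod_congr rfl fun k _ => h1 k, Finset.prod_congr rfl fun k _ => h2 k]
  ring

lemma ind_mul_ind (t : Dd d → ℝ) (p q : Px d n) :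
    ∑ T' ∈ typesF d n, ((tw t T' : ℝ) : ℂ) * (ind T' p * ind T' q)
      = if typeOf p = typeOf q then ((tw t (typeOf q) : ℝ) : ℂ) else 0 := by
  classical
  by_cases h : typeOf p = typeOf q
  · rw [if_pos h]
    have hterm : ∀ T' ∈ typesF d n, ((tw t T' : ℝ) : ℂ) * (ind T' p * ind T' q)
        = if typeOf q = T' then ((tw t T' : ℝ) : ℂ) else 0 := by
      intro T' _
      simp only [ind, h]
      split_ifs <;> simp
    rw [Finset.sum_congr rfl hterm]
    rw [Finset.sum_ite_eq (typesF d n) (typeOf q) (fun T' => ((tw t T' : ℝ) : ℂ))]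
    rw [if_pos (typeOf_mem_typesF q)]
  · rw [if_neg h]
    have hterm : ∀ T' ∈ typesF d n, ((tw t T' : ℝ) : ℂ) * (ind T' p * ind T' q) = 0 := by
      intro T' _
      simp only [ind]
      split_ifs with h1 h2
      · exact absurd (h1.trans h2.symm) h
      all_goals simp
    rw [Finset.sum_congr rfl hterm, Finset.sum_const_zero]

lemma qf_ind_global (B : Matrix (Ix d n) (Ix d n) ℂ) (t : Dd d → ℝ) :
    ∑ T' ∈ typesF d n, ((tw t T' : ℝ) : ℂ) * qf B (ind T') (ind T')
      = ∑ p : Px d n, ∑ q : Px d n, core B p q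
          * ∑ T' ∈ typesF d n, ((tw t T' : ℝ) : ℂ) * (ind T' p * ind T' q) := by
  classical
  simp only [qf, ind_conj, Finset.mul_sum]
  rw [Finset.sum_comm (s := typesF d n) (t := (Finset.univ : Finset (Px d n)))]
  refine Finset.sum_congr rfl fun p _ => ?_
  rw [Finset.sum_comm (s := typesF d n) (t := (Finset.univ : Finset (Px d n)))]
  refine Finset.sum_congr rfl fun q _ => Finset.sum_congr rfl fun T' _ => by ring

lemma sum_z_qf (B : Matrix (Ix d n) (Ix d n) ℂ) (t : Dd d → ℝ) (ht : ∀ c, 0 ≤ t c) :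
    ∑ z : Dd d → Fin (n+1), qf B (wv t z) (wv t z)
      = (((n+1 : ℕ)) : ℂ) ^ (d * d)
        * ∑ T' ∈ typesF d n, ((tw t T' : ℝ) : ℂ) * qf B (ind T') (ind T') := by
  classical
  have hL : ∑ z : Dd d → Fin (n+1), qf B (wv t z) (wv t z)
      = ∑ p : Px d n, ∑ q : Px d n, core B p q
          * ∑ z : Dd d → Fin (n+1), (starRingEnd ℂ) (wv t z p) * wv t z q := by
    simp only [qf]
    rw [Finset.sum_comm]
    refine Finset.sum_congr rfl fun p _ => ?_
    rw [Finset.sum_comm]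
    refine Finset.sum_congr rfl fun q _ => ?_
    rw [Finset.mul_sum]
    refine Finset.sum_congr rfl fun z _ => ?_
    ring
  have hpt : ∀ p q : Px d n, ∑ z : Dd d → Fin (n+1), (starRingEnd ℂ) (wv t z p) * wv t z q
      = (((n+1 : ℕ)) : ℂ) ^ (d * d)
        * ∑ T' ∈ typesF d n, ((tw t T' : ℝ) : ℂ) * (ind T' p * ind T' q) := by
    intro p q
    rw [zsum t ht p q, ind_mul_ind t p q]
  rw [hL, Finset.sum_congr rfl fun p _ => Finset.sum_congr rfl fun q _ =>
    congrArg (fun x => core B p q * x) (hpt p q)]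
  rw [qf_ind_global B t]
  rw [Finset.mul_sum]
  refine Finset.sum_congr rfl fun p _ => ?_
  rw [Finset.mul_sum]
  refine Finset.sum_congr rfl fun q _ => by ring

lemma card_zspace : Fintype.card (Dd d → Fin (n+1)) = (n+1)^(d*d) := by
  rw [Fintype.card_pi, Finset.prod_const, Finset.card_univ, Fintype.card_fin,
    Fintype.card_prod, Fintype.card_fin]

lemma tw_nonneg {t : Dd d → ℝ} (ht : ∀ c, 0 ≤ t c) (T : Dd d → ℕ) : 0 ≤ tw t T :=
  Finset.prod_nonneg fun c _ => pow_nonneg (ht c) _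

lemma cls_bound {B : Matrix (Ix d n) (Ix d n) ℂ} (hBpsd : B.PosSemidef) {ε : ℝ} (hε : 0 ≤ ε)
    (hn : 0 < n)
    (hdet : ∀ ρ : Matrix (Fin d) (Fin d) ℂ, IsDensityMatrix ρ → ((B * tensorPow ρ n).trace).re ≤ ε)
    (p₀ : Px d n) :
    (qf B (ind (typeOf p₀)) (ind (typeOf p₀))).re
      ≤ ε * (((typesF d n).card : ℝ) * (clsCard d n (typeOf p₀) : ℝ)) := by
  classical
  set t : Dd d → ℝ := fun c => (typeOf p₀ c : ℝ) / n with htdef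
  have ht : ∀ c, 0 ≤ t c := fun c => div_nonneg (Nat.cast_nonneg _) (Nat.cast_nonneg _)
  have hsum : ∑ c, t c = 1 := by
    rw [htdef, ← Finset.sum_div,
      show ∑ c, (typeOf p₀ c : ℝ) = ((∑ c, typeOf p₀ c : ℕ) : ℝ) by push_cast; ring,
      typeOf_sum p₀]
    field_simp
  have hden : ∀ z : Dd d → Fin (n+1), IsDensityMatrix (gram d (phiv t z)) :=
    fun z => ⟨gram_posSemidef _, gram_trace t ht hsum z⟩
  have htr : ∀ z : Dd d → Fin (n+1),
      (B * tensorPow (gram d (phiv t z)) n).trace = qf B (wv t z) (wv t z) :=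
    fun z => trace_gram_qf B (phiv t z)
  have hsum_le : ∑ z : Dd d → Fin (n+1), (qf B (wv t z) (wv t z)).re
      ≤ ((n+1 : ℝ)) ^ (d*d) * ε := by
    calc ∑ z : Dd d → Fin (n+1), (qf B (wv t z) (wv t z)).re
        ≤ ∑ _z : Dd d → Fin (n+1), ε := by
          refine Finset.sum_le_sum fun z _ => ?_
          rw [← htr z]
          exact hdet _ (hden z)
      _ = ((n+1 : ℝ)) ^ (d*d) * ε := by
          rw [Finset.sum_const, Finset.card_univ, nsmul_eq_mul, card_zspace]
          push_cast
          ring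
  have hre : ∑ z : Dd d → Fin (n+1), (qf B (wv t z) (wv t z)).re
      = ((n+1 : ℝ)) ^ (d*d) * ∑ T' ∈ typesF d n, tw t T' * (qf B (ind T') (ind T')).re := by
    have h1 : (∑ z : Dd d → Fin (n+1), qf B (wv t z) (wv t z)).re
        = ∑ z : Dd d → Fin (n+1), (qf B (wv t z) (wv t z)).re := Complex.re_sum _ _
    rw [← h1, sum_z_qf B t ht]
    rw [show (((n+1 : ℕ)) : ℂ) ^ (d * d) = ((((n+1:ℝ)) ^ (d*d) : ℝ) : ℂ) by push_cast; ring]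
    rw [Complex.re_ofReal_mul]
    congr 1
    rw [Complex.re_sum]
    exact Finset.sum_congr rfl fun T' _ => Complex.re_ofReal_mul _ _
  have hP : (0:ℝ) < ((n+1 : ℝ)) ^ (d*d) := by positivity
  have hsum2 : ∑ T' ∈ typesF d n, tw t T' * (qf B (ind T') (ind T')).re ≤ ε := by
    have := hre ▸ hsum_le
    exact le_of_mul_le_mul_left this hP
  have hsingle : tw t (typeOf p₀) * (qf B (ind (typeOf p₀)) (ind (typeOf p₀))).re ≤ ε := by
    refine le_trans (Finset.single_le_sum (f := fun T' => tw t T' * (qf B (ind T') (ind T')).re)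
      (fun T' _ => mul_nonneg (tw_nonneg ht T') (qf_nonneg hBpsd _)) (typeOf_mem_typesF p₀)) hsum2
  have hkey := key_count p₀ hn
  have h0 : 0 ≤ (qf B (ind (typeOf p₀)) (ind (typeOf p₀))).re := qf_nonneg hBpsd _
  calc (qf B (ind (typeOf p₀)) (ind (typeOf p₀))).re
      = (qf B (ind (typeOf p₀)) (ind (typeOf p₀))).re * 1 := by ring
    _ ≤ (qf B (ind (typeOf p₀)) (ind (typeOf p₀))).re
        * (((typesF d n).card : ℝ) * ((clsCard d n (typeOf p₀) : ℝ) * tw t (typeOf p₀))) :=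
        mul_le_mul_of_nonneg_left hkey h0
    _ = (((typesF d n).card : ℝ) * (clsCard d n (typeOf p₀) : ℝ))
        * (tw t (typeOf p₀) * (qf B (ind (typeOf p₀)) (ind (typeOf p₀))).re) := by ring
    _ ≤ (((typesF d n).card : ℝ) * (clsCard d n (typeOf p₀) : ℝ)) * ε := by
        refine mul_le_mul_of_nonneg_left hsingle ?_
        positivity
    _ = ε * (((typesF d n).card : ℝ) * (clsCard d n (typeOf p₀) : ℝ)) := by ring

lemma comp_perm_inj (i j : Ix d n) (π : Equiv.Perm (Fin n)) :
    i ∘ π = j ∘ π ↔ i = j := by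
  constructor
  · intro h
    funext k
    have := congrFun h (π.symm k)
    simpa using this
  · rintro rfl; rfl

lemma permInvariant_one : PermInvariant (1 : Matrix (Ix d n) (Ix d n) ℂ) := by
  intro π i j
  by_cases h : i = j
  · subst h; simp
  · rw [Matrix.one_apply_ne, Matrix.one_apply_ne h]
    rw [Ne, comp_perm_inj]
    exact h

def compPermE (π : Equiv.Perm (Fin n)) : Ix d n ≃ Ix d n where
  toFun r := r ∘ π
  invFun r := r ∘ π.symm
  left_inv r := by funext k; simp
  right_inv r := by funext k; simp

lemma permInvariant_mul {M N : Matrix (Ix d n) (Ix d n) ℂ}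
    (hM : PermInvariant M) (hN : PermInvariant N) : PermInvariant (M * N) := by
  intro π i j
  rw [Matrix.mul_apply, Matrix.mul_apply]
  rw [← Equiv.sum_comp (compPermE (d := d) π) (fun r => M (i ∘ π) r * N r (j ∘ π))]
  refine Finset.sum_congr rfl fun r _ => ?_
  show M (i ∘ π) (r ∘ π) * N (r ∘ π) (j ∘ π) = M i r * N r j
  rw [hM π i r, hN π r j]

lemma permInvariant_pow {B : Matrix (Ix d n) (Ix d n) ℂ} (hB : PermInvariant B) (l : ℕ) :
    PermInvariant (B ^ l) := by
  induction l with
  | zero => simpa using permInvariant_one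
  | succ l ih =>
    rw [pow_succ]
    exact permInvariant_mul ih hB

lemma qf_const_mul (B : Matrix (Ix d n) (Ix d n) ℂ) (a : ℂ) (u : Px d n → ℂ) :
    qf B (fun p => a * u p) (fun p => a * u p)
      = ((Complex.normSq a : ℝ) : ℂ) * qf B u u := by
  have hna : ((Complex.normSq a : ℝ) : ℂ) = (starRingEnd ℂ) a * a := by
    rw [mul_comm, Complex.mul_conj]
  rw [hna, qf, qf, Finset.mul_sum]
  refine Finset.sum_congr rfl fun p _ => ?_
  rw [Finset.mul_sum]
  refine Finset.sum_congr rfl fun q _ => ?_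
  rw [_root_.map_mul]
  ring

lemma main_ineq {B : Matrix (Ix d n) (Ix d n) ℂ} (hBpsd : B.PosSemidef)
    (hBinv : PermInvariant B) {ε : ℝ} (hε : 0 ≤ ε) (hn : 0 < n)
    (hdet : ∀ ρ : Matrix (Fin d) (Fin d) ℂ, IsDensityMatrix ρ → ((B * tensorPow ρ n).trace).re ≤ ε)
    (l : ℕ) :
    ((B ^ (2*l+1)).trace).re ≤ (ε * ((typesF d n).card : ℝ)^2) * ((B ^ (2*l)).trace).re := by
  classical
  set S : Matrix (Ix d n) (Ix d n) ℂ := B ^ l with hSdef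
  have hSH : Sᴴ = S := hBpsd.1.pow l
  set Φ : Px d n → ℂ := fun p => S (fstI p) (sndI p) with hΦdef
  set m : ℝ := ((typesF d n).card : ℝ) with hmdef
  have hm0 : 0 ≤ m := Nat.cast_nonneg _
  -- trace identities
  have htr1 : qf B Φ Φ = (B ^ (2*l+1)).trace := by
    rw [hΦdef, qf_trace B S, hSH]
    congr 1
    rw [hSdef, ← pow_add, ← pow_succ', two_mul]
  have hSinv : PermInvariant S := permInvariant_pow hBinv l
  have hconst : ∀ p p' : Px d n, typeOf p = typeOf p' → Φ p = Φ p' := by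
    intro p p' h
    obtain ⟨π, rfl⟩ := exists_perm_of_typeOf_eq h
    show S (fstI p) (sndI p) = S (fstI (p ∘ π)) (sndI (p ∘ π))
    have h1 : fstI (p ∘ π) = fstI p ∘ π := rfl
    have h2 : sndI (p ∘ π) = sndI p ∘ π := rfl
    rw [h1, h2, hSinv π (fstI p) (sndI p)]
  set uT : (Dd d → ℕ) → Px d n → ℂ := fun T p => ind T p * Φ p with huT
  have hdecomp : ∀ p : Px d n, Φ p = ∑ T ∈ typesF d n, uT T p := by
    intro p
    rw [huT]
    simp only [ind, ite_mul, one_mul, zero_mul]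
    rw [Finset.sum_ite_eq (typesF d n) (typeOf p) (fun _ => Φ p),
      if_pos (typeOf_mem_typesF p)]
  have step1 : (qf B Φ Φ).re ≤ m * ∑ T ∈ typesF d n, (qf B (uT T) (uT T)).re := by
    have : qf B Φ Φ = qf B (fun p => ∑ T ∈ typesF d n, uT T p)
        (fun p => ∑ T ∈ typesF d n, uT T p) := by
      congr 1 <;> exact funext hdecomp
    rw [this]
    exact qf_avg hBpsd (typesF d n) uT
  have step2 : ∀ T ∈ typesF d n, (qf B (uT T) (uT T)).re
      ≤ (ε * m) * ∑ p ∈ (Finset.univ : Finset (Px d n)).filter (fun p => typeOf p = T),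
          Complex.normSq (Φ p) := by
    intro T hT
    obtain ⟨p₀, _, rfl⟩ := Finset.mem_image.mp hT
    have hu : uT (typeOf p₀) = fun p => Φ p₀ * ind (typeOf p₀) p := by
      funext p
      rw [huT]
      simp only [ind]
      by_cases h : typeOf p = typeOf p₀
      · rw [if_pos h, one_mul, mul_one, hconst p p₀ h]
      · rw [if_neg h, zero_mul, mul_zero]
    have hq : (qf B (uT (typeOf p₀)) (uT (typeOf p₀))).re
        = Complex.normSq (Φ p₀) * (qf B (ind (typeOf p₀)) (ind (typeOf p₀))).re := by
      rw [hu, qf_const_mul B (Φ p₀) (ind (typeOf p₀)), Complex.re_ofReal_mul]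
    have hclassum : ∑ p ∈ (Finset.univ : Finset (Px d n)).filter
          (fun p => typeOf p = typeOf p₀), Complex.normSq (Φ p)
        = (clsCard d n (typeOf p₀) : ℝ) * Complex.normSq (Φ p₀) := by
      rw [Finset.sum_congr rfl fun p hp =>
        congrArg Complex.normSq (hconst p p₀ (Finset.mem_filter.mp hp).2)]
      rw [Finset.sum_const, nsmul_eq_mul]
      rfl
    rw [hq, hclassum]
    have hcls := cls_bound hBpsd hε hn hdet p₀
    have h0 : 0 ≤ Complex.normSq (Φ p₀) := Complex.normSq_nonneg _
    calc Complex.normSq (Φ p₀) * (qf B (ind (typeOf p₀)) (ind (typeOf p₀))).re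
        ≤ Complex.normSq (Φ p₀) * (ε * (m * (clsCard d n (typeOf p₀) : ℝ))) :=
          mul_le_mul_of_nonneg_left hcls h0
      _ = (ε * m) * ((clsCard d n (typeOf p₀) : ℝ) * Complex.normSq (Φ p₀)) := by ring
  have step3 : ∑ T ∈ typesF d n, ∑ p ∈ (Finset.univ : Finset (Px d n)).filter
        (fun p => typeOf p = T), Complex.normSq (Φ p)
      = ∑ p : Px d n, Complex.normSq (Φ p) :=
    Finset.sum_fiberwise_of_maps_to (fun p _ => typeOf_mem_typesF p) _
  have step4 : ∑ p : Px d n, Complex.normSq (Φ p) = ((B ^ (2*l)).trace).re := by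
    have hB2l : B ^ (2*l) = S * Sᴴ := by
      rw [hSH, hSdef, ← pow_add, two_mul]
    have htr : (B ^ (2*l)).trace = ∑ i : Ix d n, ∑ j : Ix d n,
        ((Complex.normSq (S i j) : ℝ) : ℂ) := by
      rw [hB2l, Matrix.trace]
      refine Finset.sum_congr rfl fun i _ => ?_
      rw [Matrix.diag, Matrix.mul_apply]
      refine Finset.sum_congr rfl fun j _ => ?_
      rw [Matrix.conjTranspose_apply, RCLike.star_def, Complex.mul_conj]
    rw [htr, Complex.re_sum]
    rw [Finset.sum_congr rfl fun i (_ : i ∈ Finset.univ) => Complex.re_sum Finset.univ _]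
    simp only [Complex.ofReal_re]
    rw [← Equiv.sum_comp (pairE (d := d) (n := n)) (fun p => Complex.normSq (Φ p))]
    rw [Fintype.sum_prod_type]
    rfl
  calc ((B ^ (2*l+1)).trace).re = (qf B Φ Φ).re := by rw [htr1]
    _ ≤ m * ∑ T ∈ typesF d n, (qf B (uT T) (uT T)).re := step1
    _ ≤ m * ∑ T ∈ typesF d n, ((ε * m) * ∑ p ∈ (Finset.univ : Finset (Px d n)).filter
          (fun p => typeOf p = T), Complex.normSq (Φ p)) := by
        refine mul_le_mul_of_nonneg_left (Finset.sum_le_sum step2) hm0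
    _ = (ε * m^2) * ∑ T ∈ typesF d n, ∑ p ∈ (Finset.univ : Finset (Px d n)).filter
          (fun p => typeOf p = T), Complex.normSq (Φ p) := by
        rw [← Finset.mul_sum]
        ring
    _ = (ε * m^2) * ((B ^ (2*l)).trace).re := by rw [step3, step4]

section Spectral
variable {N : Type*} [Fintype N] [DecidableEq N]

lemma conj_pow {U D B : Matrix N N ℂ} (hsu : star U * U = 1) (hus : U * star U = 1)
    (hspec : B = U * D * star U) (k : ℕ) : B ^ k = U * D ^ k * star U := by
  induction k with
  | zero => simp only [pow_zero, Matrix.mul_one]; exact hus.symm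
  | succ k ih =>
    rw [pow_succ, ih, hspec, pow_succ]
    calc U * D ^ k * star U * (U * D * star U)
        = U * D ^ k * (star U * U) * (D * star U) := by simp only [Matrix.mul_assoc]
      _ = U * (D ^ k * D) * star U := by rw [hsu]; simp only [Matrix.mul_one, Matrix.mul_assoc]

lemma unitary_spectral_pow {B : Matrix N N ℂ} (hB : B.IsHermitian) (k : ℕ) :
    B ^ k = (hB.eigenvectorUnitary : Matrix N N ℂ)
        * (Matrix.diagonal (RCLike.ofReal ∘ hB.eigenvalues)) ^ k
        * (star (hB.eigenvectorUnitary : Matrix N N ℂ)) := by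
  have hmem := hB.eigenvectorUnitary.2
  rw [Unitary.mem_iff] at hmem
  exact conj_pow hmem.1 hmem.2 hB.spectral_theorem k

lemma trace_pow_re {B : Matrix N N ℂ} (hB : B.IsHermitian) (k : ℕ) :
    ((B ^ k).trace).re = ∑ i, (hB.eigenvalues i) ^ k := by
  have hmem := hB.eigenvectorUnitary.2
  rw [Unitary.mem_iff] at hmem
  obtain ⟨hsu, _⟩ := hmem
  rw [unitary_spectral_pow hB k]
  set U : Matrix N N ℂ := (hB.eigenvectorUnitary : Matrix N N ℂ)
  set D : Matrix N N ℂ := Matrix.diagonal (RCLike.ofReal ∘ hB.eigenvalues)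
  have h1 : (U * D ^ k * star U).trace = (D ^ k).trace := by
    rw [Matrix.trace_mul_comm, ← Matrix.mul_assoc, hsu, Matrix.one_mul]
  rw [h1]
  rw [show D ^ k = Matrix.diagonal (fun i => (RCLike.ofReal (hB.eigenvalues i) : ℂ) ^ k) from ?_]
  · rw [Matrix.trace_diagonal, Complex.re_sum]
    refine Finset.sum_congr rfl fun i _ => ?_
    rw [show (RCLike.ofReal (hB.eigenvalues i) : ℂ) = ((hB.eigenvalues i : ℝ) : ℂ) from rfl]
    rw [← Complex.ofReal_pow, Complex.ofReal_re]
  · rw [Matrix.diagonal_pow]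
    rfl

lemma eigen_all_le {B : Matrix N N ℂ} (hBpsd : B.PosSemidef) (c0 : ℝ) (hc0 : 0 ≤ c0)
    (hiter : ∀ l : ℕ, ((B ^ (2*l+1)).trace).re ≤ c0 * ((B ^ (2*l)).trace).re) :
    ∀ i, hBpsd.1.eigenvalues i ≤ c0 := by
  classical
  set lam := hBpsd.1.eigenvalues with hlam
  have hpos : ∀ i, 0 ≤ lam i := fun i => hBpsd.eigenvalues_nonneg i
  have hiter' : ∀ l : ℕ, ∑ i, lam i ^ (2*l+1) ≤ c0 * ∑ i, lam i ^ (2*l) := by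
    intro l
    have h1 := trace_pow_re hBpsd.1 (2*l+1)
    have h2 := trace_pow_re hBpsd.1 (2*l)
    have h := hiter l
    rw [h1, h2] at h
    exact h
  intro i0
  by_contra hcon
  push_neg at hcon
  have hl0 : 0 < lam i0 := lt_of_le_of_lt hc0 hcon
  rcases eq_or_lt_of_le hc0 with hc0eq | hc0pos
  · -- c0 = 0
    have := hiter' 0
    rw [← hc0eq] at this
    simp only [zero_mul] at this
    have hle : lam i0 ^ (2*0+1) ≤ ∑ i, lam i ^ (2*0+1) :=
      Finset.single_le_sum (fun i _ => pow_nonneg (hpos i) _) (Finset.mem_univ i0)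
    simp only [pow_one, Nat.mul_zero, Nat.zero_add] at hle this
    nlinarith
  · -- c0 > 0
    have hkey : ∀ l : ℕ, (lam i0 ^ 2) ^ l * (lam i0 - c0)
        ≤ (Fintype.card N : ℝ) * c0 * (c0 ^ 2) ^ l := by
      intro l
      have hterm : ∀ i, c0 * lam i ^ (2*l) - lam i ^ (2*l+1) ≤ c0 ^ (2*l) * c0 := by
        intro i
        have : c0 * lam i ^ (2*l) - lam i ^ (2*l+1) = lam i ^ (2*l) * (c0 - lam i) := by
          rw [pow_succ]
          ring
        rw [this]
        rcases le_or_gt (lam i) c0 with h | h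
        · have h1 : lam i ^ (2*l) ≤ c0 ^ (2*l) := pow_le_pow_left₀ (hpos i) h _
          have h2 : c0 - lam i ≤ c0 := by linarith [hpos i]
          have h3 : 0 ≤ c0 - lam i := by linarith
          calc lam i ^ (2*l) * (c0 - lam i) ≤ c0 ^ (2*l) * (c0 - lam i) :=
                mul_le_mul_of_nonneg_right h1 h3
            _ ≤ c0 ^ (2*l) * c0 := mul_le_mul_of_nonneg_left h2 (pow_nonneg hc0 _)
        · have h1 : lam i ^ (2*l) * (c0 - lam i) ≤ 0 :=
            mul_nonpos_of_nonneg_of_nonpos (pow_nonneg (hpos i) _) (by linarith)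
          have h2 : (0:ℝ) ≤ c0 ^ (2*l) * c0 := mul_nonneg (pow_nonneg hc0 _) hc0
          linarith
      have hsum : lam i0 ^ (2*l) * (lam i0 - c0)
          ≤ ∑ i ∈ Finset.univ.erase i0, (c0 * lam i ^ (2*l) - lam i ^ (2*l+1)) := by
        have hsplit1 : ∑ i, lam i ^ (2*l+1)
            = lam i0 ^ (2*l+1) + ∑ i ∈ Finset.univ.erase i0, lam i ^ (2*l+1) :=
          (Finset.add_sum_erase _ _ (Finset.mem_univ i0)).symm
        have hsplit2 : ∑ i, lam i ^ (2*l)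
            = lam i0 ^ (2*l) + ∑ i ∈ Finset.univ.erase i0, lam i ^ (2*l) :=
          (Finset.add_sum_erase _ _ (Finset.mem_univ i0)).symm
        have := hiter' l
        rw [hsplit1, hsplit2] at this
        have hdist : lam i0 ^ (2*l) * (lam i0 - c0)
            = lam i0 ^ (2*l+1) - c0 * lam i0 ^ (2*l) := by
          rw [pow_succ]; ring
        rw [hdist]
        rw [Finset.sum_sub_distrib, ← Finset.mul_sum]
        linarith
      have hbound : ∑ i ∈ Finset.univ.erase i0, (c0 * lam i ^ (2*l) - lam i ^ (2*l+1))
          ≤ (Fintype.card N : ℝ) * (c0 ^ (2*l) * c0) := by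
        calc ∑ i ∈ Finset.univ.erase i0, (c0 * lam i ^ (2*l) - lam i ^ (2*l+1))
            ≤ ∑ _i ∈ Finset.univ.erase i0, c0 ^ (2*l) * c0 :=
              Finset.sum_le_sum fun i _ => hterm i
          _ = ((Finset.univ.erase i0).card : ℝ) * (c0 ^ (2*l) * c0) := by
              rw [Finset.sum_const, nsmul_eq_mul]
          _ ≤ (Fintype.card N : ℝ) * (c0 ^ (2*l) * c0) := by
              refine mul_le_mul_of_nonneg_right ?_ (mul_nonneg (pow_nonneg hc0 _) hc0)
              have := Finset.card_erase_le (s := (Finset.univ : Finset N)) (a := i0)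
              have hcard : (Finset.univ : Finset N).card = Fintype.card N := Finset.card_univ
              exact_mod_cast le_trans this (le_of_eq hcard)
        -- close
      have hpow2 : lam i0 ^ (2*l) = (lam i0 ^ 2) ^ l := by rw [← pow_mul, mul_comm]
      have hpowc : c0 ^ (2*l) * c0 = c0 * (c0 ^ 2) ^ l := by
        rw [← pow_mul, mul_comm 2 l, pow_mul]
        ring
      calc (lam i0 ^ 2) ^ l * (lam i0 - c0) = lam i0 ^ (2*l) * (lam i0 - c0) := by rw [hpow2]
        _ ≤ ∑ i ∈ Finset.univ.erase i0, (c0 * lam i ^ (2*l) - lam i ^ (2*l+1)) := hsum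
        _ ≤ (Fintype.card N : ℝ) * (c0 ^ (2*l) * c0) := hbound
        _ = (Fintype.card N : ℝ) * c0 * (c0 ^ 2) ^ l := by rw [hpowc]; ring
    -- archimedean contradiction
    have hq : 1 < (lam i0 ^ 2) / (c0 ^ 2) := by
      rw [lt_div_iff₀ (by positivity)]
      rw [one_mul]
      have : c0 < lam i0 := hcon
      nlinarith
    obtain ⟨l, hl⟩ := pow_unbounded_of_one_lt
      ((Fintype.card N : ℝ) * c0 / (lam i0 - c0)) hq
    have hc2 : (0:ℝ) < (c0 ^ 2) ^ l := by positivity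
    have hgap : 0 < lam i0 - c0 := by linarith
    have hfin : (Fintype.card N : ℝ) * c0 * (c0 ^ 2) ^ l
        < (lam i0 ^ 2) ^ l * (lam i0 - c0) := by
      have h1 : ((Fintype.card N : ℝ) * c0 / (lam i0 - c0)) * ((c0 ^ 2) ^ l * (lam i0 - c0))
          < ((lam i0 ^ 2) / (c0 ^ 2)) ^ l * ((c0 ^ 2) ^ l * (lam i0 - c0)) := by
        refine mul_lt_mul_of_pos_right hl (by positivity)
      have h2 : ((Fintype.card N : ℝ) * c0 / (lam i0 - c0)) * ((c0 ^ 2) ^ l * (lam i0 - c0))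
          = (Fintype.card N : ℝ) * c0 * (c0 ^ 2) ^ l := by
        field_simp
      have h3 : ((lam i0 ^ 2) / (c0 ^ 2)) ^ l * ((c0 ^ 2) ^ l * (lam i0 - c0))
          = (lam i0 ^ 2) ^ l * (lam i0 - c0) := by
        rw [div_pow, ← mul_assoc, div_mul_cancel₀]
        positivity
      rw [h2, h3] at h1
      exact h1
    exact absurd (hkey l) (not_le.mpr hfin)

end Spectral

end
end NogoPf

open NogoPf

/-- **No-go theorem for permutation-invariant universal detectors, first part** (Theorem 6). -/
theorem nogo_universal_detector_lower (d n : ℕ) (hd : 1 ≤ d) (hn : 1 ≤ n)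
    (ε : ℝ) (hε : 0 ≤ ε)
    (A : Matrix (Fin n → Fin d) (Fin n → Fin d) ℂ)
    (hAinv : PermInvariant A)
    (hA : A.PosSemidef)
    (hA' : ((1 : Matrix (Fin n → Fin d) (Fin n → Fin d) ℂ) - A).PosSemidef)
    (hdetect : ∀ ρ : Matrix (Fin d) (Fin d) ℂ, IsDensityMatrix ρ →
      1 - ε ≤ ((A * tensorPow ρ n).trace).re) :
    (A - (1 - ε * (2 * (d : ℝ) * (n : ℝ)) ^ (4 * d ^ 2)) •
        (1 : Matrix (Fin n → Fin d) (Fin n → Fin d) ℂ)).PosSemidef := by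
  classical
  have hn0 : 0 < n := hn
  set B : Matrix (Ix d n) (Ix d n) ℂ := 1 - A with hBdef
  have hBpsd : B.PosSemidef := hA'
  have hBinv : PermInvariant B := by
    intro π i j
    show (1 - A) (i ∘ π) (j ∘ π) = (1 - A) i j
    rw [Matrix.sub_apply, Matrix.sub_apply, hAinv π i j, permInvariant_one π i j]
  have hdetB : ∀ ρ : Matrix (Fin d) (Fin d) ℂ, IsDensityMatrix ρ →
      ((B * tensorPow ρ n).trace).re ≤ ε := by
    intro ρ hρ
    have h1 : B * tensorPow ρ n = tensorPow ρ n - A * tensorPow ρ n := by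
      rw [hBdef, Matrix.sub_mul, Matrix.one_mul]
    have h2 : (tensorPow ρ n).trace = 1 := by
      rw [trace_tensorPow, hρ.2, one_pow]
    rw [h1, Matrix.trace_sub, Complex.sub_re, h2]
    have h3 := hdetect ρ hρ
    simp only [Complex.one_re]
    linarith
  set m : ℝ := ((typesF d n).card : ℝ) with hmdef
  set c0 : ℝ := ε * m ^ 2 with hc0def
  have hc0 : 0 ≤ c0 := mul_nonneg hε (sq_nonneg _)
  have hiter : ∀ l : ℕ, ((B ^ (2*l+1)).trace).re ≤ c0 * ((B ^ (2*l)).trace).re := by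
    intro l
    have := main_ineq hBpsd hBinv hε hn0 hdetB l
    rw [hc0def, hmdef]
    exact this
  have heig : ∀ i, hBpsd.1.eigenvalues i ≤ c0 := eigen_all_le hBpsd c0 hc0 hiter
  set κ : ℝ := ε * (2 * (d : ℝ) * (n : ℝ)) ^ (4 * d ^ 2) with hκdef
  have hd1 : (1:ℝ) ≤ (d:ℝ) := by exact_mod_cast hd
  have hn1 : (1:ℝ) ≤ (n:ℝ) := by exact_mod_cast hn
  have hbase : (n:ℝ) + 1 ≤ 2 * (d:ℝ) * (n:ℝ) := by nlinarith
  have hbase1 : (1:ℝ) ≤ 2 * (d:ℝ) * (n:ℝ) := by nlinarith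
  have hmκ : c0 ≤ κ := by
    have h1 : m ≤ ((n:ℝ) + 1) ^ (d*d) := by
      rw [hmdef]
      have hc := card_typesF (d := d) (n := n)
      calc ((typesF d n).card : ℝ) ≤ (((n+1)^(d*d) : ℕ) : ℝ) := by exact_mod_cast hc
        _ = ((n:ℝ) + 1) ^ (d*d) := by push_cast; ring
    have hm0 : (0:ℝ) ≤ m := Nat.cast_nonneg _
    have h2 : m ^ 2 ≤ (((n:ℝ) + 1) ^ (d*d)) ^ 2 := pow_le_pow_left₀ hm0 h1 2
    have h3 : (((n:ℝ) + 1) ^ (d*d)) ^ 2 = ((n:ℝ) + 1) ^ (2*(d*d)) := by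
      rw [← pow_mul]
      ring_nf
    have h4 : ((n:ℝ) + 1) ^ (2*(d*d)) ≤ (2 * (d:ℝ) * (n:ℝ)) ^ (2*(d*d)) :=
      pow_le_pow_left₀ (by positivity) hbase _
    have h5 : (2 * (d:ℝ) * (n:ℝ)) ^ (2*(d*d)) ≤ (2 * (d:ℝ) * (n:ℝ)) ^ (4 * d ^ 2) := by
      apply pow_le_pow_right₀ hbase1
      have : d ^ 2 = d * d := sq d
      omega
    have hfin : m ^ 2 ≤ (2 * (d:ℝ) * (n:ℝ)) ^ (4 * d ^ 2) := by
      calc m ^ 2 ≤ (((n:ℝ) + 1) ^ (d*d)) ^ 2 := h2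
        _ = ((n:ℝ) + 1) ^ (2*(d*d)) := h3
        _ ≤ (2 * (d:ℝ) * (n:ℝ)) ^ (2*(d*d)) := h4
        _ ≤ (2 * (d:ℝ) * (n:ℝ)) ^ (4 * d ^ 2) := h5
    rw [hc0def, hκdef]
    exact mul_le_mul_of_nonneg_left hfin hε
  -- spectral reconstruction
  have hB : B.IsHermitian := hBpsd.1
  have hmem := hB.eigenvectorUnitary.2
  rw [Unitary.mem_iff] at hmem
  obtain ⟨hsu, hus⟩ := hmem
  set U : Matrix (Ix d n) (Ix d n) ℂ := (hB.eigenvectorUnitary : Matrix (Ix d n) (Ix d n) ℂ)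
    with hUdef
  set lam : Ix d n → ℝ := hB.eigenvalues with hlamdef
  have hspec : B = U * Matrix.diagonal (RCLike.ofReal ∘ lam) * star U := hB.spectral_theorem
  have hAB : A - (1 - κ) • (1 : Matrix (Ix d n) (Ix d n) ℂ)
      = κ • (1 : Matrix (Ix d n) (Ix d n) ℂ) - B := by
    rw [hBdef]
    ext i j
    simp only [Matrix.sub_apply, Matrix.smul_apply]
    rw [Complex.real_smul, Complex.real_smul]
    push_cast
    ring
  have e1 : κ • (1 : Matrix (Ix d n) (Ix d n) ℂ) - B
      = U * (κ • (1 : Matrix (Ix d n) (Ix d n) ℂ) - Matrix.diagonal (RCLike.ofReal ∘ lam))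
        * star U := by
    have h1 : U * (κ • (1 : Matrix (Ix d n) (Ix d n) ℂ)) * star U
        = κ • (1 : Matrix (Ix d n) (Ix d n) ℂ) := by
      rw [mul_smul_comm, Matrix.mul_one, Matrix.smul_mul, hus]
    rw [Matrix.mul_sub, Matrix.sub_mul, h1, ← hspec]
  have e2 : κ • (1 : Matrix (Ix d n) (Ix d n) ℂ) - Matrix.diagonal (RCLike.ofReal ∘ lam)
      = Matrix.diagonal (fun i => ((κ - lam i : ℝ) : ℂ)) := by
    ext i j
    by_cases h : i = j
    · subst h
      simp only [Matrix.sub_apply, Matrix.smul_apply, Matrix.one_apply_eq,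
        Matrix.diagonal_apply_eq, Function.comp_apply]
      rw [Complex.real_smul, show (RCLike.ofReal (lam i) : ℂ) = ((lam i : ℝ) : ℂ) from rfl]
      push_cast
      ring
    · simp only [Matrix.sub_apply, Matrix.smul_apply, Matrix.one_apply_ne h,
        Matrix.diagonal_apply_ne _ h]
      simp
  have hdpsd : (Matrix.diagonal (fun i : Ix d n => ((κ - lam i : ℝ) : ℂ))).PosSemidef := by
    rw [Matrix.posSemidef_diagonal_iff]
    intro i
    rw [Complex.zero_le_real]
    have := heig i
    linarith [hmκ]
  have hfinal : A - (1 - κ) • (1 : Matrix (Ix d n) (Ix d n) ℂ)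
      = U * Matrix.diagonal (fun i => ((κ - lam i : ℝ) : ℂ)) * Uᴴ := by
    rw [hAB, e1, e2, Matrix.star_eq_conjTranspose]
  rw [show (A - (1 - ε * (2 * (d : ℝ) * (n : ℝ)) ^ (4 * d ^ 2)) •
      (1 : Matrix (Fin n → Fin d) (Fin n → Fin d) ℂ))
      = A - (1 - κ) • (1 : Matrix (Ix d n) (Ix d n) ℂ) from rfl]
  rw [hfinal]
  exact hdpsd.mul_mul_conjTranspose_same U
end
end

section
/- Robustification inequality for permutation-invariant operators: Let d ≥ 1, n ≥ 1, let S be a nonempty finite set, ρ : S → density matrices on ℂ^d, and fix s : Fin n → S. Let p : S → ℝ be the empirical distribution p(x) := |{k : s k = x}| / n, and let ρ̄ := Σ_x p(x) • ρ_x. Then for every permutation-invariant positive semidefinite matrix B indexed by (Fin n → Fin d), Re(trace(B · ρ̄^{⊗n})) ≥ (2n)^{−|S|} · Re(trace(B · (ρ_{s 1} ⊗ ⋯ ⊗ ρ_{s n}))). -/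
open Matrix Filter
open scoped ComplexOrder

noncomputable section

namespace Rb

set_option linter.unusedSectionVars false

/-- Key factorial inequality: `a! * a^b ≤ b! * a^a`. -/
lemma fact_mul_pow_le (a b : ℕ) : a.factorial * a ^ b ≤ b.factorial * a ^ a := by
  rcases le_total a b with h | h
  · have key : ∀ m, a ≤ m → a ^ (m - a) * a.factorial ≤ m.factorial := by
      intro m hm
      induction m, hm using Nat.le_induction with
      | base => simp
      | succ k hk ih =>
        have h1 : k + 1 - a = (k - a) + 1 := by omega
        rw [h1, pow_succ]
        calc a ^ (k - a) * a * a.factorial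
            = a * (a ^ (k - a) * a.factorial) := by ring
          _ ≤ a * k.factorial := Nat.mul_le_mul_left _ ih
          _ ≤ (k + 1) * k.factorial := Nat.mul_le_mul_right _ (by omega)
          _ = (k + 1).factorial := rfl
    calc a.factorial * a ^ b = (a ^ (b - a) * a.factorial) * a ^ a := by
          rw [mul_comm (a ^ (b - a)) a.factorial, mul_assoc, ← pow_add,
            Nat.sub_add_cancel h]
      _ ≤ b.factorial * a ^ a := Nat.mul_le_mul_right _ (key b h)
  · have key : ∀ m, b ≤ m → m.factorial ≤ b.factorial * m ^ (m - b) := by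
      intro m hm
      induction m, hm using Nat.le_induction with
      | base => simp
      | succ k hk ih =>
        have h1 : k + 1 - b = (k - b) + 1 := by omega
        rw [h1, pow_succ]
        calc (k + 1).factorial = (k + 1) * k.factorial := rfl
          _ ≤ (k + 1) * (b.factorial * k ^ (k - b)) := Nat.mul_le_mul_left _ ih
          _ ≤ (k + 1) * (b.factorial * (k + 1) ^ (k - b)) := by
              exact Nat.mul_le_mul_left _ (Nat.mul_le_mul_left _
                (Nat.pow_le_pow_left (by omega) _))
          _ = b.factorial * ((k + 1) ^ (k - b) * (k + 1)) := by ring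
    calc a.factorial * a ^ b ≤ (b.factorial * a ^ (a - b)) * a ^ b :=
          Nat.mul_le_mul_right _ (key a h)
      _ = b.factorial * a ^ a := by
          rw [mul_assoc, ← pow_add, Nat.sub_add_cancel h]

variable {n : ℕ} {S : Type} [Fintype S] [DecidableEq S]

/-- The type (empirical fiber counts) of a tuple. -/
def typeOf (t : Fin n → S) : S → ℕ := fun x => (Finset.univ.filter fun k => t k = x).card

lemma sum_typeOf (t : Fin n → S) : ∑ x, typeOf t x = n := by
  have := (Finset.card_eq_sum_card_fiberwise
    (f := t) (s := Finset.univ) (t := Finset.univ) (fun k _ => Finset.mem_univ _))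
  simpa [typeOf] using this.symm

lemma typeOf_comp_perm (u : Fin n → S) (π : Equiv.Perm (Fin n)) :
    typeOf (u ∘ π) = typeOf u := by
  funext x
  have h : Fintype.card {k // u (π k) = x} = Fintype.card {k // u k = x} :=
    Fintype.card_congr (Equiv.subtypeEquiv π fun _ => Iff.rfl)
  simpa [typeOf, Fintype.card_subtype, Function.comp] using h

lemma exists_perm_of_typeOf_eq {t u : Fin n → S} (h : typeOf t = typeOf u) :
    ∃ π : Equiv.Perm (Fin n), t = u ∘ π := by
  have e : ∀ x, {k // t k = x} ≃ {k // u k = x} := fun x =>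
    Fintype.equivOfCardEq (by
      rw [Fintype.card_subtype, Fintype.card_subtype]
      exact congrFun h x)
  exact ⟨Equiv.ofFiberEquiv e, funext fun k => (Equiv.ofFiberEquiv_map e k).symm⟩

lemma card_fiber_mul (u : Fin n → S) :
    (Finset.univ.filter fun t : Fin n → S => typeOf t = typeOf u).card
      * ∏ x, (typeOf u x).factorial = n.factorial := by
  classical
  rw [← Fintype.card_subtype]
  have hconst : ∀ t : {t : Fin n → S // typeOf t = typeOf u},
      Fintype.card {π : Equiv.Perm (Fin n) // u ∘ π = (t : Fin n → S)}
        = ∏ x, (typeOf u x).factorial := by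
    intro t
    obtain ⟨π₀, ht⟩ := exists_perm_of_typeOf_eq t.prop
    have e : {π : Equiv.Perm (Fin n) // u ∘ π = (t : Fin n → S)}
        ≃ {g : Equiv.Perm (Fin n) // u ∘ g = u} := by
      refine Equiv.subtypeEquiv (Equiv.mulRight π₀⁻¹) fun π => ?_
      rw [ht]
      constructor
      · intro hh
        funext k
        have := congrFun hh (π₀⁻¹ k)
        simpa using this
      · intro hh
        funext k
        have := congrFun hh (π₀ k)
        simpa using this
    rw [Fintype.card_congr e, DomMulAct.stabilizer_card u]
    exact Finset.prod_congr rfl fun x _ => by rw [Fintype.card_subtype]; rfl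
  have hsig := Fintype.card_congr (Equiv.sigmaFiberEquiv
    (fun π : Equiv.Perm (Fin n) =>
      (⟨u ∘ π, typeOf_comp_perm u π⟩ : {t : Fin n → S // typeOf t = typeOf u})))
  rw [Fintype.card_sigma] at hsig
  have hre : ∀ t : {t : Fin n → S // typeOf t = typeOf u},
      Fintype.card {π : Equiv.Perm (Fin n) //
          (⟨u ∘ π, typeOf_comp_perm u π⟩ : {t : Fin n → S // typeOf t = typeOf u}) = t}
        = ∏ x, (typeOf u x).factorial := by
    intro t
    rw [Fintype.card_congr (Equiv.subtypeEquivRight fun π => Subtype.ext_iff)]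
    exact hconst t
  rw [Finset.sum_congr rfl fun t _ => hre t, Finset.sum_const, Finset.card_univ,
    smul_eq_mul] at hsig
  rw [hsig, Fintype.card_perm, Fintype.card_fin]

lemma tensorProd_conjTranspose {d m : ℕ} (A : Fin m → Matrix (Fin d) (Fin d) ℂ) :
    (tensorProd A)ᴴ = tensorProd fun k => (A k)ᴴ := by
  ext i j
  simp [tensorProd, Matrix.conjTranspose_apply, star_prod]

lemma tensorProd_mul {d m : ℕ} (A C : Fin m → Matrix (Fin d) (Fin d) ℂ) :
    tensorProd A * tensorProd C = tensorProd fun k => A k * C k := by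
  ext i j
  rw [Matrix.mul_apply]
  have h : tensorProd (fun k => A k * C k) i j
      = ∑ p : Fin m → Fin d, ∏ k, (A k (i k) (p k) * C k (p k) (j k)) := by
    simp only [tensorProd, Matrix.mul_apply]
    rw [Finset.prod_univ_sum (fun _ => Finset.univ)
      (fun k l => A k (i k) l * C k l (j k)), Fintype.piFinset_univ]
  rw [h]
  exact Finset.sum_congr rfl fun p _ => Finset.prod_mul_distrib.symm

open scoped MatrixOrder in
lemma exists_eq_conjTranspose_mul_self {ι : Type} [Fintype ι] [DecidableEq ι]
    {M : Matrix ι ι ℂ} (h : M.PosSemidef) : ∃ A : Matrix ι ι ℂ, M = Aᴴ * A :=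
  CStarAlgebra.nonneg_iff_eq_star_mul_self.mp h.nonneg

lemma tensorProd_posSemidef {d m : ℕ} (ρs : Fin m → Matrix (Fin d) (Fin d) ℂ)
    (h : ∀ k, (ρs k).PosSemidef) : (tensorProd ρs).PosSemidef := by
  choose A hA using fun k => (exists_eq_conjTranspose_mul_self (h k) :
    ∃ A : Matrix (Fin d) (Fin d) ℂ, ρs k = Aᴴ * A)
  have hh : tensorProd ρs = (tensorProd A)ᴴ * tensorProd A := by
    rw [tensorProd_conjTranspose, tensorProd_mul]
    exact congrArg tensorProd (funext fun k => hA k)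
  rw [hh]
  exact Matrix.posSemidef_conjTranspose_mul_self _

lemma posSemidef_trace_re_nonneg {ι : Type} [Fintype ι] [DecidableEq ι]
    {M : Matrix ι ι ℂ} (hM : M.PosSemidef) : 0 ≤ M.trace.re := by
  rw [Matrix.trace, Complex.re_sum]
  refine Finset.sum_nonneg fun i _ => ?_
  have h := hM.dotProduct_mulVec_nonneg (Pi.single i 1)
  have hval : (star (Pi.single i 1) : ι → ℂ) ⬝ᵥ (M *ᵥ Pi.single i 1) = M i i := by
    simp [Matrix.mulVec_single, dotProduct, Pi.single_apply,
      apply_ite (star : ℂ → ℂ), Finset.sum_ite_eq', Matrix.diag]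
  rw [hval] at h
  exact (Complex.le_def.mp h).1

lemma trace_mul_re_nonneg {ι : Type} [Fintype ι] [DecidableEq ι]
    {B C : Matrix ι ι ℂ} (hB : B.PosSemidef) (hC : C.PosSemidef) :
    0 ≤ ((B * C).trace).re := by
  obtain ⟨A, rfl⟩ : ∃ A : Matrix ι ι ℂ, C = Aᴴ * A := exists_eq_conjTranspose_mul_self hC
  have h1 : (B * (Aᴴ * A)).trace = (A * B * Aᴴ).trace := by
    rw [← Matrix.mul_assoc, Matrix.trace_mul_comm, ← Matrix.mul_assoc]
  rw [h1]
  exact posSemidef_trace_re_nonneg (hB.mul_mul_conjTranspose_same A)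

lemma trace_submatrix_equiv'' {ι κ : Type} [Fintype ι] [Fintype κ]
    (A : Matrix ι ι ℂ) (e : κ ≃ ι) : (A.submatrix e e).trace = A.trace := by
  rw [Matrix.trace, Matrix.trace]
  exact Equiv.sum_comp e (fun i => A i i)

lemma trace_perm {d m : ℕ} {S' : Type}
    (ρ : S' → Matrix (Fin d) (Fin d) ℂ)
    (B : Matrix (Fin m → Fin d) (Fin m → Fin d) ℂ) (hBinv : PermInvariant B)
    (u : Fin m → S') (π : Equiv.Perm (Fin m)) :
    (B * tensorProd fun k => ρ (u (π k))).trace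
      = (B * tensorProd fun k => ρ (u k)).trace := by
  classical
  set f : (Fin m → Fin d) ≃ (Fin m → Fin d) :=
    Equiv.arrowCongr (π : Fin m ≃ Fin m) (Equiv.refl (Fin d)) with hf
  have hfa : ∀ a : Fin m → Fin d, f a = a ∘ π.symm := by
    intro a; funext k; simp [hf, Equiv.arrowCongr]
  have hM : (tensorProd fun k => ρ (u (π k)))
      = (tensorProd fun k => ρ (u k)).submatrix f f := by
    ext a b
    rw [Matrix.submatrix_apply, hfa, hfa]
    show (∏ k, ρ (u (π k)) (a k) (b k)) = ∏ k, ρ (u k) ((a ∘ π.symm) k) ((b ∘ π.symm) k)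
    have := Equiv.prod_comp π (fun k => ρ (u k) ((a ∘ π.symm) k) ((b ∘ π.symm) k))
    rw [← this]
    refine Finset.prod_congr rfl fun k _ => ?_
    simp [Function.comp]
  have hBsub : B.submatrix f f = B := by
    ext a b
    rw [Matrix.submatrix_apply, hfa, hfa]
    exact hBinv π.symm a b
  rw [hM]
  conv_lhs => rw [← hBsub]
  rw [Matrix.submatrix_mul_equiv]
  exact trace_submatrix_equiv'' _ f

end Rb

/-- **Robustification inequality for permutation-invariant operators.** -/
theorem robustification (d n : ℕ) (hd : 1 ≤ d) (hn : 1 ≤ n)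
    (S : Type) [Fintype S] [Nonempty S] [DecidableEq S]
    (ρ : S → Matrix (Fin d) (Fin d) ℂ) (hρ : ∀ x, IsDensityMatrix (ρ x))
    (s : Fin n → S)
    (B : Matrix (Fin n → Fin d) (Fin n → Fin d) ℂ)
    (hBinv : PermInvariant B) (hB : B.PosSemidef) :
    ((2 * (n : ℝ)) ^ (Fintype.card S))⁻¹ *
        ((B * tensorProd fun k => ρ (s k)).trace).re ≤
      ((B * tensorPow
          (∑ x : S, (((Finset.univ.filter fun k => s k = x).card : ℝ) / (n : ℝ)) • ρ x)
          n).trace).re := by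
  classical
  have hn0 : (0 : ℝ) < n := by exact_mod_cast hn
  -- notation
  set p : S → ℝ := fun x => ((Rb.typeOf s x : ℝ) / (n : ℝ)) with hp
  set W : (Fin n → S) → ℝ := fun t => ∏ k, p (t k) with hWdef
  set T : (Fin n → S) → ℝ := fun t => ((B * tensorProd fun k => ρ (t k)).trace).re with hTdef
  have hpnn : ∀ x, 0 ≤ p x := fun x => div_nonneg (Nat.cast_nonneg _) hn0.le
  have hWnn : ∀ t, 0 ≤ W t := fun t => Finset.prod_nonneg fun k _ => hpnn _
  have hTnn : ∀ t, 0 ≤ T t := fun t =>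
    Rb.trace_mul_re_nonneg hB (Rb.tensorProd_posSemidef _ fun k => (hρ (t k)).1)
  -- step 1: expansion of the tensor power of the mixture
  have hpow : tensorPow
      (∑ x : S, (((Finset.univ.filter fun k => s k = x).card : ℝ) / (n : ℝ)) • ρ x) n
      = ∑ t : Fin n → S, (W t : ℂ) • tensorProd fun k => ρ (t k) := by
    ext i j
    have hent : ∀ k : Fin n,
        (∑ x : S, (((Finset.univ.filter fun k' => s k' = x).card : ℝ) / (n : ℝ)) • ρ x)
          (i k) (j k) = ∑ x : S, ((p x : ℂ)) * ρ x (i k) (j k) := by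
      intro k
      rw [Matrix.sum_apply]
      refine Finset.sum_congr rfl fun x _ => ?_
      rw [Matrix.smul_apply, Complex.real_smul]
      rfl
    show (∏ k, (∑ x : S, (((Finset.univ.filter fun k' => s k' = x).card : ℝ) / (n : ℝ)) • ρ x)
        (i k) (j k)) = _
    rw [Finset.prod_congr rfl fun k _ => hent k,
      Finset.prod_univ_sum (fun _ => Finset.univ)
        (fun k x => ((p x : ℂ)) * ρ x (i k) (j k)), Fintype.piFinset_univ]
    rw [Matrix.sum_apply]
    refine Finset.sum_congr rfl fun t _ => ?_
    rw [Finset.prod_mul_distrib]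
    have hW' : ((W t : ℝ) : ℂ) = ∏ k : Fin n, ((p (t k) : ℝ) : ℂ) := by
      rw [hWdef]; push_cast; rfl
    simp only [Matrix.smul_apply, smul_eq_mul, tensorProd, hW']
  -- step 2: the trace as a weighted sum
  have expand : ((B * tensorPow
      (∑ x : S, (((Finset.univ.filter fun k => s k = x).card : ℝ) / (n : ℝ)) • ρ x)
      n).trace).re = ∑ t : Fin n → S, W t * T t := by
    rw [hpow, Matrix.mul_sum, Matrix.trace_sum, Complex.re_sum]
    refine Finset.sum_congr rfl fun t _ => ?_
    rw [Matrix.mul_smul, Matrix.trace_smul, smul_eq_mul, Complex.re_ofReal_mul]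
  -- invariance on fibers
  have hTeq : ∀ t : Fin n → S, Rb.typeOf t = Rb.typeOf s → T t = T s := by
    intro t ht
    obtain ⟨π, rfl⟩ := Rb.exists_perm_of_typeOf_eq ht
    exact congrArg Complex.re (Rb.trace_perm ρ B hBinv s π)
  -- W in terms of the type
  have hWform : ∀ t : Fin n → S, W t = ∏ x, p x ^ Rb.typeOf t x := by
    intro t
    have hin : ∀ x : S,
        (∏ k ∈ Finset.univ.filter fun k => t k = x, p (t k)) = p x ^ Rb.typeOf t x := by
      intro x
      rw [Finset.prod_congr rfl (fun k hk => by rw [(Finset.mem_filter.mp hk).2])]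
      exact Finset.prod_const _
    show (∏ k, p (t k)) = _
    rw [← Finset.prod_fiberwise Finset.univ t (fun k => p (t k))]
    exact Finset.prod_congr rfl fun x _ => hin x
  -- the fiber sums
  have hfibsum : ∀ v : Fin n → S,
      ∑ t ∈ Finset.univ.filter (fun t : Fin n → S => Rb.typeOf t = Rb.typeOf v), W t
        = ((Finset.univ.filter fun t : Fin n → S => Rb.typeOf t = Rb.typeOf v).card : ℝ)
            * ∏ x, p x ^ Rb.typeOf v x := by
    intro v
    rw [Finset.sum_congr rfl (fun t ht => by
      rw [hWform t, (Finset.mem_filter.mp ht).2]), Finset.sum_const, nsmul_eq_mul]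
  -- the max-term comparison
  have hfible : ∀ v : Fin n → S,
      ∑ t ∈ Finset.univ.filter (fun t : Fin n → S => Rb.typeOf t = Rb.typeOf v), W t
        ≤ ∑ t ∈ Finset.univ.filter (fun t : Fin n → S => Rb.typeOf t = Rb.typeOf s), W t := by
    intro v
    rw [hfibsum v, hfibsum s]
    set m := Rb.typeOf v with hm
    set c := Rb.typeOf s with hc
    have hFm := Rb.card_fiber_mul v
    have hFc := Rb.card_fiber_mul s
    set Fm := (Finset.univ.filter fun t : Fin n → S => Rb.typeOf t = m).card with hFmd
    set Fc := (Finset.univ.filter fun t : Fin n → S => Rb.typeOf t = c).card with hFcd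
    -- rewrite the products of powers of p
    have hprodp : ∀ w : S → ℕ, (∑ x, w x = n) →
        (∏ x, p x ^ w x) = (∏ x, ((c x : ℝ)) ^ w x) / (n : ℝ) ^ n := by
      intro w hw
      have : ∀ x : S, p x ^ w x = ((c x : ℝ)) ^ w x / ((n : ℝ)) ^ w x := by
        intro x; rw [hp]; rw [div_pow]
      rw [Finset.prod_congr rfl fun x _ => this x, Finset.prod_div_distrib,
        Finset.prod_pow_eq_pow_sum, hw]
    rw [hprodp m (Rb.sum_typeOf v), hprodp c (Rb.sum_typeOf s)]
    have hkey : (∏ x, ((c x).factorial : ℝ)) * ∏ x, ((c x : ℝ)) ^ m x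
        ≤ (∏ x, ((m x).factorial : ℝ)) * ∏ x, ((c x : ℝ)) ^ c x := by
      rw [← Finset.prod_mul_distrib, ← Finset.prod_mul_distrib]
      have : ∀ x : S, ((c x).factorial : ℝ) * ((c x : ℝ)) ^ m x
          ≤ ((m x).factorial : ℝ) * ((c x : ℝ)) ^ c x := by
        intro x
        exact_mod_cast Nat.cast_le.mpr (Rb.fact_mul_pow_le (c x) (m x))
      exact Finset.prod_le_prod (fun x _ => by positivity) (fun x _ => this x)
    -- assemble
    set dm := (∏ x, ((m x).factorial : ℝ)) with hdm
    set dc := (∏ x, ((c x).factorial : ℝ)) with hdc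
    have hdm0 : 0 < dm := Finset.prod_pos fun x _ => by positivity
    have hdc0 : 0 < dc := Finset.prod_pos fun x _ => by positivity
    have hFmdm : (Fm : ℝ) * dm = (n.factorial : ℝ) := by
      rw [hdm, ← Nat.cast_prod, ← Nat.cast_mul]
      exact_mod_cast congrArg (Nat.cast : ℕ → ℝ) hFm
    have hFcdc : (Fc : ℝ) * dc = (n.factorial : ℝ) := by
      rw [hdc, ← Nat.cast_prod, ← Nat.cast_mul]
      exact_mod_cast congrArg (Nat.cast : ℕ → ℝ) hFc
    have hmul : (Fm : ℝ) * (∏ x, ((c x : ℝ)) ^ m x)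
        ≤ (Fc : ℝ) * (∏ x, ((c x : ℝ)) ^ c x) := by
      have h1 : ((Fm : ℝ) * (∏ x, ((c x : ℝ)) ^ m x)) * (dm * dc)
          ≤ ((Fc : ℝ) * (∏ x, ((c x : ℝ)) ^ c x)) * (dm * dc) := by
        calc ((Fm : ℝ) * (∏ x, ((c x : ℝ)) ^ m x)) * (dm * dc)
            = ((Fm : ℝ) * dm) * (dc * ∏ x, ((c x : ℝ)) ^ m x) := by ring
          _ = (n.factorial : ℝ) * (dc * ∏ x, ((c x : ℝ)) ^ m x) := by rw [hFmdm]
          _ ≤ (n.factorial : ℝ) * (dm * ∏ x, ((c x : ℝ)) ^ c x) := by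
              exact mul_le_mul_of_nonneg_left hkey (by positivity)
          _ = ((Fc : ℝ) * dc) * (dm * ∏ x, ((c x : ℝ)) ^ c x) := by rw [hFcdc]
          _ = ((Fc : ℝ) * (∏ x, ((c x : ℝ)) ^ c x)) * (dm * dc) := by ring
      exact le_of_mul_le_mul_right h1 (by positivity)
    rw [← mul_div_assoc, ← mul_div_assoc]
    gcongr ?_ / _
  -- sum of all weights is one
  have hW1 : ∑ t : Fin n → S, W t = 1 := by
    have hps : ∑ x, p x = 1 := by
      rw [hp, ← Finset.sum_div]
      rw [show ∑ x, ((Rb.typeOf s x : ℝ)) = ((∑ x, Rb.typeOf s x : ℕ) : ℝ) by push_cast; rfl]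
      rw [Rb.sum_typeOf s]
      exact div_self hn0.ne'
    calc ∑ t : Fin n → S, W t
        = ∑ t ∈ Fintype.piFinset (fun _ : Fin n => (Finset.univ : Finset S)),
            ∏ k, p (t k) := by rw [Fintype.piFinset_univ]
      _ = ∏ k : Fin n, ∑ x : S, p x := Finset.sum_prod_piFinset Finset.univ fun _ x => p x
      _ = 1 := by rw [hps]; simp
  -- number of types
  have himagecard : ((Finset.univ.image (Rb.typeOf : (Fin n → S) → S → ℕ)).card : ℝ)
      ≤ (2 * (n : ℝ)) ^ (Fintype.card S) := by
    have hsub : Finset.univ.image (Rb.typeOf : (Fin n → S) → S → ℕ)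
        ⊆ Fintype.piFinset (fun _ : S => Finset.range (n + 1)) := by
      intro w hw
      obtain ⟨t, _, rfl⟩ := Finset.mem_image.mp hw
      rw [Fintype.mem_piFinset]
      intro x
      rw [Finset.mem_range, Nat.lt_succ_iff]
      calc Rb.typeOf t x ≤ (Finset.univ : Finset (Fin n)).card := Finset.card_filter_le _ _
        _ = n := by rw [Finset.card_univ, Fintype.card_fin]
    have h1 : (Finset.univ.image (Rb.typeOf : (Fin n → S) → S → ℕ)).card ≤ (n + 1) ^ (Fintype.card S) := by
      calc (Finset.univ.image (Rb.typeOf : (Fin n → S) → S → ℕ)).card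
          ≤ (Fintype.piFinset (fun _ : S => Finset.range (n + 1))).card :=
            Finset.card_le_card hsub
        _ = (n + 1) ^ (Fintype.card S) := by
            rw [Fintype.card_piFinset]
            simp [Finset.card_range]
    calc ((Finset.univ.image (Rb.typeOf : (Fin n → S) → S → ℕ)).card : ℝ)
        ≤ ((n : ℝ) + 1) ^ (Fintype.card S) := by exact_mod_cast h1
      _ ≤ (2 * (n : ℝ)) ^ (Fintype.card S) := by
          apply pow_le_pow_left₀ (by positivity)
          have h1n : (1 : ℝ) ≤ (n : ℝ) := by exact_mod_cast hn
          linarith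
  -- the key lower bound on the weight of the fiber of s
  have hK : (0 : ℝ) < (2 * (n : ℝ)) ^ (Fintype.card S) := by positivity
  have hfibs_nn : 0 ≤ ∑ t ∈ Finset.univ.filter
      (fun t : Fin n → S => Rb.typeOf t = Rb.typeOf s), W t :=
    Finset.sum_nonneg fun t _ => hWnn t
  have hkeyW : ((2 * (n : ℝ)) ^ (Fintype.card S))⁻¹
      ≤ ∑ t ∈ Finset.univ.filter (fun t : Fin n → S => Rb.typeOf t = Rb.typeOf s), W t := by
    have hdecomp : ∑ t : Fin n → S, W t
        = ∑ w ∈ Finset.univ.image (Rb.typeOf : (Fin n → S) → S → ℕ),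
            ∑ t ∈ Finset.univ.filter (fun t : Fin n → S => Rb.typeOf t = w), W t :=
      (Finset.sum_fiberwise_of_maps_to
        (fun t _ => Finset.mem_image_of_mem Rb.typeOf (Finset.mem_univ t)) W).symm
    have hbound : (1 : ℝ) ≤ ((Finset.univ.image (Rb.typeOf : (Fin n → S) → S → ℕ)).card : ℝ)
        * ∑ t ∈ Finset.univ.filter (fun t : Fin n → S => Rb.typeOf t = Rb.typeOf s), W t := by
      rw [← hW1, hdecomp]
      have := Finset.sum_le_card_nsmul
        (Finset.univ.image (Rb.typeOf : (Fin n → S) → S → ℕ))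
        (fun w => ∑ t ∈ Finset.univ.filter (fun t : Fin n → S => Rb.typeOf t = w), W t)
        (∑ t ∈ Finset.univ.filter (fun t : Fin n → S => Rb.typeOf t = Rb.typeOf s), W t)
        (by
          intro w hw
          obtain ⟨v, _, rfl⟩ := Finset.mem_image.mp hw
          exact hfible v)
      rw [nsmul_eq_mul] at this
      exact this
    have h2 : (1 : ℝ) ≤ (2 * (n : ℝ)) ^ (Fintype.card S)
        * ∑ t ∈ Finset.univ.filter (fun t : Fin n → S => Rb.typeOf t = Rb.typeOf s), W t :=
      le_trans hbound (mul_le_mul_of_nonneg_right himagecard hfibs_nn)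
    rw [inv_eq_one_div, div_le_iff₀ hK]
    linarith [h2]
  -- final chain
  calc ((2 * (n : ℝ)) ^ (Fintype.card S))⁻¹ *
        ((B * tensorProd fun k => ρ (s k)).trace).re
      = ((2 * (n : ℝ)) ^ (Fintype.card S))⁻¹ * T s := rfl
    _ ≤ (∑ t ∈ Finset.univ.filter (fun t : Fin n → S => Rb.typeOf t = Rb.typeOf s), W t)
          * T s := mul_le_mul_of_nonneg_right hkeyW (hTnn s)
    _ = ∑ t ∈ Finset.univ.filter (fun t : Fin n → S => Rb.typeOf t = Rb.typeOf s),
          W t * T t := by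
        rw [Finset.sum_mul]
        exact Finset.sum_congr rfl fun t ht => by
          rw [hTeq t (Finset.mem_filter.mp ht).2]
    _ ≤ ∑ t : Fin n → S, W t * T t :=
        Finset.sum_le_sum_of_subset_of_nonneg (Finset.subset_univ _)
          (fun t _ _ => mul_nonneg (hWnn t) (hTnn t))
    _ = _ := expand.symm
end
end
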